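/- arXiv:1602.08504 — 2 statements merged into one kernel-verified Lean document; each statement's English description precedes it below -/
import Mathlib

section
/- Every contextual category C arises, up to isomorphism, from a model of the theory of substitutions 𝕊: define M_{(ctx,n)} = Ob_n(C), M_{(tm,n)} = { (A, s) : A ∈ Ob_{n+1}(C), s a section of p_A }, with ty, ft, the variables v_{n,i} given by v_{n,i}(A) = (p^{i+1}(A)*(ft^i(A)), s_{p^i_A}), and substitution defined by iterated pullback; then M is a model of 𝕊 and its associated contextual category F(M) is isomorphic to C. -/
universe u

/-- Iterated `ft`, lowering a context of length `k` to one of length `m ≤ k`. -/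
def ftLe' {Ctx : ℕ → Type u} (ft : ∀ n, Ctx (n + 1) → Ctx n) :
    ∀ {k m : ℕ}, m ≤ k → Ctx k → Ctx m
  | 0, 0, _, A => A
  | k + 1, m, h, A =>
    if hm : m = k + 1 then cast (congrArg Ctx hm.symm) A
    else ftLe' ft (by omega) (ft k A)

/-- A model of the partial Horn theory of substitutions `𝕊`: sorts `(ctx, n)` and `(tm, n)`
(with `(ty, n) := (ctx, n+1)`), operations `*`, `ft`, `ty`, variables `v_{n,i}` and full
substitution `subst_{p,n,k}` (a partial operation, represented using `Part`), subject to the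
axioms of `𝕊`. -/
structure SubModel : Type (u + 1) where
  Ctx : ℕ → Type u
  Tm : ℕ → Type u
  star : Ctx 0
  ctx_zero_unique : ∀ A : Ctx 0, A = star
  ft : ∀ n, Ctx (n + 1) → Ctx n
  ty : ∀ n, Tm n → Ctx (n + 1)
  v : ∀ n i, i < n → Ctx n → Tm n
  substTy : ∀ n k, Ctx n → Ctx (k + 1) → (Fin k → Tm n) → Part (Ctx (n + 1))
  substTm : ∀ n k, Ctx n → Tm k → (Fin k → Tm n) → Part (Tm n)
  -- the axioms are stated below, after the auxiliary definitions
  ax_def_substTy : ∀ n k (B : Ctx n) (A : Ctx (k + 1)) (a : Fin k → Tm n),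
    (substTy n k B A a).Dom ↔
      ∀ i : Fin k, ty n (a i) ∈ substTy n i B
        (ftLe' ft (Nat.succ_le_of_lt i.isLt) (ft k A))
        (fun j => a (Fin.castLE (le_of_lt i.isLt) j))
  ax_def_substTm : ∀ n k (B : Ctx n) (b : Tm k) (a : Fin k → Tm n),
    (substTm n k B b a).Dom ↔
      ∀ i : Fin k, ty n (a i) ∈ substTy n i B
        (ftLe' ft (Nat.succ_le_of_lt i.isLt) (ft k (ty k b)))
        (fun j => a (Fin.castLE (le_of_lt i.isLt) j))
  ax_type_var : ∀ n i (h : i < n) (A : Ctx n),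
    ty n (v n i h A) ∈ substTy n (n - i - 1) A
      (ftLe' ft (by omega) A)
      (fun j => v n (n - 1 - j) (by omega) A)
  ax_type_substTy : ∀ n k B A a C, C ∈ substTy n k B A a → ft n C = B
  ax_type_substTm : ∀ n k (B : Ctx n) (b : Tm k) (a : Fin k → Tm n),
    (substTm n k B b a).map (ty n) = substTy n k B (ty k b) a
  ax_subst_var_ty : ∀ n (A : Ctx (n + 1)),
    substTy n n (ft n A) A (fun j => v n (n - 1 - j) (by omega) (ft n A)) = Part.some A
  ax_subst_var_tm : ∀ n (b : Tm n),
    substTm n n (ft n (ty n b)) b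
      (fun j => v n (n - 1 - j) (by omega) (ft n (ty n b))) = Part.some b
  ax_var_subst : ∀ n k (B : Ctx n) (A : Ctx k) (a : Fin k → Tm n)
    (_ : ∀ i : Fin k, ty n (a i) ∈ substTy n i B
        (ftLe' ft (Nat.succ_le_of_lt i.isLt) A)
        (fun j => a (Fin.castLE (le_of_lt i.isLt) j)))
    (i : ℕ) (h : i < k),
    substTm n k B (v k i h A) a = Part.some (a ⟨k - i - 1, by omega⟩)
  ax_subst_subst_tm : ∀ n k m (C : Ctx n) (B : Ctx k) (b : Fin k → Tm n)
    (a : Fin m → Tm k) (t : Tm m)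
    (_ : ∀ i : Fin k, ty n (b i) ∈ substTy n i C
        (ftLe' ft (Nat.succ_le_of_lt i.isLt) B)
        (fun j => b (Fin.castLE (le_of_lt i.isLt) j)))
    (_ : ∀ i : Fin m, ty k (a i) ∈ substTy k i B
        (ftLe' ft (Nat.succ_le_of_lt i.isLt) (ft m (ty m t)))
        (fun j => a (Fin.castLE (le_of_lt i.isLt) j)))
    (s : Tm k) (_ : s ∈ substTm k m B t a)
    (c : Fin m → Tm n) (_ : ∀ i, c i ∈ substTm n k C (a i) b),
    substTm n k C s b = substTm n m C t c
  ax_subst_subst_ty : ∀ n k m (C : Ctx n) (B : Ctx k) (b : Fin k → Tm n)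
    (a : Fin m → Tm k) (A : Ctx (m + 1))
    (_ : ∀ i : Fin k, ty n (b i) ∈ substTy n i C
        (ftLe' ft (Nat.succ_le_of_lt i.isLt) B)
        (fun j => b (Fin.castLE (le_of_lt i.isLt) j)))
    (_ : ∀ i : Fin m, ty k (a i) ∈ substTy k i B
        (ftLe' ft (Nat.succ_le_of_lt i.isLt) (ft m A))
        (fun j => a (Fin.castLE (le_of_lt i.isLt) j)))
    (A' : Ctx (k + 1)) (_ : A' ∈ substTy k m B A a)
    (c : Fin m → Tm n) (_ : ∀ i, c i ∈ substTm n k C (a i) b),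
    substTy n k C A' b = substTy n m C A c


namespace SubModel

variable (M : SubModel.{u})

/-- The `Hom` predicate of `𝕊`: the tuple `(a_1, …, a_k)` is a morphism `B → A` of the
associated category, i.e. each `a_i` has the type obtained by substituting `a_1, …, a_{i-1}`
into the `i`-th component of `A`. -/
def Hom (n k : ℕ) (B : M.Ctx n) (A : M.Ctx k) (a : Fin k → M.Tm n) : Prop :=
  ∀ i : Fin k, M.ty n (a i) ∈ M.substTy n i B
    (ftLe' M.ft (Nat.succ_le_of_lt i.isLt) A)
    (fun j => a (Fin.castLE (le_of_lt i.isLt) j))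

/-- The identity morphism `id_A = (v_{n,n-1}(A), …, v_{n,0}(A))`. -/
def idTuple {n : ℕ} (A : M.Ctx n) : Fin n → M.Tm n :=
  fun j => M.v n (n - 1 - j) (by omega) A

/-- The projection `p_A = (v_{n+1,n}(A), …, v_{n+1,1}(A)) : A → ft(A)`. -/
def pTuple {n : ℕ} (A : M.Ctx (n + 1)) : Fin n → M.Tm (n + 1) :=
  fun j => M.v (n + 1) (n - j) (by omega) A

/-- `f : ft(A) → A` is a section of the projection `p_A`: it is a morphism and
`p_A ∘ f = id_{ft(A)}` (composition is componentwise substitution). -/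
def IsSection {k : ℕ} (A : M.Ctx (k + 1)) (f : Fin (k + 1) → M.Tm k) : Prop :=
  M.Hom k (k + 1) (M.ft k A) A f ∧
  ∀ j : Fin k, M.substTm k (k + 1) (M.ft k A) (M.pTuple A j) f =
    Part.some (M.idTuple (M.ft k A) j)

/-- The map `φ(a) = (v_{k,k-1}(ft A), …, v_{k,0}(ft A), a)`. -/
def phi {k : ℕ} (A : M.Ctx (k + 1)) (a : M.Tm k) : Fin (k + 1) → M.Tm k :=
  fun j => if h : (j : ℕ) < k then M.v k (k - 1 - j) (by omega) (M.ft k A) else a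

end SubModel




/-- A contextual category: a graded category with a terminal object of level `0`, maps
`ft`, projections `p_A`, and a strictly functorial choice of pullbacks `f*(A) = pb A B f`
with connecting maps `q(f, A)` along the projections. -/
structure CtxCat : Type (u + 1) where
  Ob : ℕ → Type u
  Hom : (Σ n, Ob n) → (Σ n, Ob n) → Type u
  id : ∀ X, Hom X X
  comp : ∀ {X Y Z}, Hom X Y → Hom Y Z → Hom X Z
  id_comp : ∀ {X Y} (f : Hom X Y), comp (id X) f = f
  comp_id : ∀ {X Y} (f : Hom X Y), comp f (id Y) = f
  assoc : ∀ {W X Y Z} (f : Hom W X) (g : Hom X Y) (h : Hom Y Z),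
    comp (comp f g) h = comp f (comp g h)
  pt : Ob 0
  pt_unique : ∀ A : Ob 0, A = pt
  toPt : ∀ X, Hom X ⟨0, pt⟩
  toPt_unique : ∀ X (f : Hom X ⟨0, pt⟩), f = toPt X
  ft : ∀ {n}, Ob (n + 1) → Ob n
  p : ∀ {n} (A : Ob (n + 1)), Hom ⟨n + 1, A⟩ ⟨n, ft A⟩
  pb : ∀ {n k} (A : Ob (n + 1)) (B : Ob k), Hom ⟨k, B⟩ ⟨n, ft A⟩ → Ob (k + 1)
  pb_ft : ∀ {n k} (A : Ob (n + 1)) (B : Ob k) (f : Hom ⟨k, B⟩ ⟨n, ft A⟩),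
    ft (pb A B f) = B
  q : ∀ {n k} (A : Ob (n + 1)) (B : Ob k) (f : Hom ⟨k, B⟩ ⟨n, ft A⟩),
    Hom ⟨k + 1, pb A B f⟩ ⟨n + 1, A⟩
  square : ∀ {n k} (A : Ob (n + 1)) (B : Ob k) (f : Hom ⟨k, B⟩ ⟨n, ft A⟩),
    comp (q A B f) (p A) =
      comp (cast (by rw [pb_ft A B f]) (p (pb A B f)) :
        Hom ⟨k + 1, pb A B f⟩ ⟨k, B⟩) f
  cartesian : ∀ {n k} (A : Ob (n + 1)) (B : Ob k) (f : Hom ⟨k, B⟩ ⟨n, ft A⟩)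
    {X : Σ n, Ob n} (g : Hom X ⟨n + 1, A⟩) (h : Hom X ⟨k, B⟩),
    comp g (p A) = comp h f →
    ∃! u : Hom X ⟨k + 1, pb A B f⟩, comp u (q A B f) = g ∧
      comp u (cast (by rw [pb_ft A B f]) (p (pb A B f)) :
        Hom ⟨k + 1, pb A B f⟩ ⟨k, B⟩) = h
  pb_id : ∀ {n} (A : Ob (n + 1)), pb A (ft A) (id ⟨n, ft A⟩) = A
  q_id : ∀ {n} (A : Ob (n + 1)), HEq (q A (ft A) (id ⟨n, ft A⟩)) (id ⟨n + 1, A⟩)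
  pb_comp : ∀ {n k m} (A : Ob (n + 1)) (B : Ob k) (f : Hom ⟨k, B⟩ ⟨n, ft A⟩)
    (C : Ob m) (g : Hom ⟨m, C⟩ ⟨k, B⟩),
    pb A C (comp g f) =
      pb (pb A B f) C (cast (by rw [pb_ft A B f]) g :
        Hom ⟨m, C⟩ ⟨k, ft (pb A B f)⟩)
  q_comp : ∀ {n k m} (A : Ob (n + 1)) (B : Ob k) (f : Hom ⟨k, B⟩ ⟨n, ft A⟩)
    (C : Ob m) (g : Hom ⟨m, C⟩ ⟨k, B⟩),
    HEq (q A C (comp g f))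
      (comp (q (pb A B f) C (cast (by rw [pb_ft A B f]) g)) (q A B f))

/-- A correspondence between a model `M` of the theory of substitutions `𝕊` and a
contextual category `C`, exhibiting `C` as the contextual category `F(M)` associated to `M`:
objects of level `n` are the contexts of length `n`, morphisms are the compatible tuples of
terms, composition is componentwise substitution, identities are the tuples of variables,
`ft` and the projections are as given, pullbacks `A[f]` are given by `subst_ty`, and the
connecting maps `q(f, A)` are given by weakened tuples together with the top variable. -/
structure SubCtxCorrespondence (M : SubModel.{u}) (C : CtxCat.{u}) where
  obEquiv : ∀ n, M.Ctx n ≃ C.Ob n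
  ft_compat : ∀ n (A : M.Ctx (n + 1)),
    C.ft (obEquiv (n + 1) A) = obEquiv n (M.ft n A)
  homEquiv : ∀ n k (B : M.Ctx n) (A : M.Ctx k),
    { a : Fin k → M.Tm n // M.Hom n k B A a } ≃
      C.Hom ⟨n, obEquiv n B⟩ ⟨k, obEquiv k A⟩
  id_compat : ∀ n (A : M.Ctx n) (h : M.Hom n n A A (M.idTuple A)),
    homEquiv n n A A ⟨M.idTuple A, h⟩ = C.id ⟨n, obEquiv n A⟩
  comp_compat : ∀ {n k m} (B : M.Ctx n) (A : M.Ctx k) (A' : M.Ctx m)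
    (f : { a // M.Hom n k B A a }) (g : { c // M.Hom k m A A' c })
    (h : { c // M.Hom n m B A' c }),
    (∀ i, h.1 i ∈ M.substTm n k B (g.1 i) f.1) →
    C.comp (homEquiv n k B A f) (homEquiv k m A A' g) = homEquiv n m B A' h
  p_compat : ∀ n (A : M.Ctx (n + 1)) (h : M.Hom (n + 1) n A (M.ft n A) (M.pTuple A)),
    homEquiv (n + 1) n A (M.ft n A) ⟨M.pTuple A, h⟩ =
      cast (by rw [ft_compat n A]) (C.p (obEquiv (n + 1) A))
  pb_compat : ∀ n k (B : M.Ctx n) (A : M.Ctx (k + 1)) (a : Fin k → M.Tm n)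
    (h : M.Hom n k B (M.ft k A) a) (T : M.Ctx (n + 1)) (_ : T ∈ M.substTy n k B A a),
    obEquiv (n + 1) T =
      C.pb (obEquiv (k + 1) A) (obEquiv n B)
        (cast (by rw [ft_compat k A]) (homEquiv n k B (M.ft k A) ⟨a, h⟩))
  q_compat : ∀ n k (B : M.Ctx n) (A : M.Ctx (k + 1)) (a : Fin k → M.Tm n)
    (h : M.Hom n k B (M.ft k A) a) (T : M.Ctx (n + 1)) (hT : T ∈ M.substTy n k B A a)
    (qf : Fin (k + 1) → M.Tm (n + 1)) (hq : M.Hom (n + 1) (k + 1) T A qf),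
    (∀ i : Fin k, qf i.castSucc ∈ M.substTm (n + 1) n T (a i) (M.pTuple T)) →
    qf (Fin.last k) = M.v (n + 1) 0 (by omega) T →
    homEquiv (n + 1) (k + 1) T A ⟨qf, hq⟩ =
      cast (by rw [pb_compat n k B A a h T hT])
        (C.q (obEquiv (k + 1) A) (obEquiv n B)
          (cast (by all_goals rw [ft_compat k A]) (homEquiv n k B (M.ft k A) ⟨a, h⟩)))

namespace CtxCat

variable {C : CtxCat.{u}}

abbrev Obj (C : CtxCat.{u}) := Σ n, C.Ob n

/-- Object equality from component equality. -/
theorem oe {k : ℕ} {B B' : C.Ob k} (e : B = B') : (⟨k, B⟩ : Obj C) = ⟨k, B'⟩ :=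
  congrArg _ e

theorem oe_inj {k : ℕ} {B B' : C.Ob k} (e : (⟨k, B⟩ : Obj C) = ⟨k, B'⟩) : B = B' := by
  have h2 : HEq B B' := (Sigma.mk.inj_iff.mp e).2
  exact eq_of_heq h2

/-- Cast a morphism along an equality of targets. -/
def cR {X Y Y' : Obj C} (e : Y = Y') (f : C.Hom X Y) : C.Hom X Y' := e ▸ f

/-- Cast a morphism along an equality of sources. -/
def cL {X X' Y : Obj C} (e : X = X') (f : C.Hom X Y) : C.Hom X' Y := e ▸ f

@[simp] theorem cR_heq {X Y Y' : Obj C} (e : Y = Y') (f : C.Hom X Y) : HEq (cR e f) f := by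
  subst e; rfl

@[simp] theorem cL_heq {X X' Y : Obj C} (e : X = X') (f : C.Hom X Y) : HEq (cL e f) f := by
  subst e; rfl

@[simp] theorem cR_rfl {X Y : Obj C} (e : Y = Y) (f : C.Hom X Y) : cR e f = f := rfl

@[simp] theorem cL_rfl {X Y : Obj C} (e : X = X) (f : C.Hom X Y) : cL e f = f := rfl

theorem comp_congr {X X' Y Y' Z Z' : Obj C} (ex : X = X') (ey : Y = Y') (ez : Z = Z')
    {f : C.Hom X Y} {f' : C.Hom X' Y'} {g : C.Hom Y Z} {g' : C.Hom Y' Z'}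
    (hf : HEq f f') (hg : HEq g g') : HEq (C.comp f g) (C.comp f' g') := by
  subst ex; subst ey; subst ez
  rw [eq_of_heq hf, eq_of_heq hg]

theorem hom_heq_iff {X Y Y' : Obj C} (e : Y = Y') {f : C.Hom X Y} {g : C.Hom X Y'} :
    HEq f g ↔ f = cR e.symm g := by subst e; simp [cR, heq_eq_eq]

theorem hom_heq_iff' {X Y Y' : Obj C} (e : Y = Y') {f : C.Hom X Y} {g : C.Hom X Y'} :
    HEq f g ↔ cR e f = g := by subst e; simp [cR, heq_eq_eq]

theorem p_congr {n : ℕ} {A A' : C.Ob (n + 1)} (e : A = A') : HEq (C.p A) (C.p A') := by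
  subst e; rfl

theorem pb_congr {n k : ℕ} {A A' : C.Ob (n + 1)} {B B' : C.Ob k}
    {f : C.Hom ⟨k, B⟩ ⟨n, C.ft A⟩} {f' : C.Hom ⟨k, B'⟩ ⟨n, C.ft A'⟩}
    (eA : A = A') (eB : B = B') (hf : HEq f f') : C.pb A B f = C.pb A' B' f' := by
  subst eA; subst eB; rw [eq_of_heq hf]

theorem q_congr {n k : ℕ} {A A' : C.Ob (n + 1)} {B B' : C.Ob k}
    {f : C.Hom ⟨k, B⟩ ⟨n, C.ft A⟩} {f' : C.Hom ⟨k, B'⟩ ⟨n, C.ft A'⟩}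
    (eA : A = A') (eB : B = B') (hf : HEq f f') : HEq (C.q A B f) (C.q A' B' f') := by
  subst eA; subst eB; rw [eq_of_heq hf]

theorem cast_hom_cR {X Y Y' : Obj C} (e : Y = Y') (h : C.Hom X Y = C.Hom X Y')
    (f : C.Hom X Y) : cast h f = cR e f := by subst e; rfl

theorem cast_hom_cL {X X' Y : Obj C} (e : X = X') (h : C.Hom X Y = C.Hom X' Y)
    (f : C.Hom X Y) : cast h f = cL e f := by subst e; rfl

/-- The projection out of a pullback, with target normalized to `B`. -/
noncomputable def pC {n k : ℕ} (A : C.Ob (n + 1)) (B : C.Ob k)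
    (f : C.Hom ⟨k, B⟩ ⟨n, C.ft A⟩) : C.Hom ⟨k + 1, C.pb A B f⟩ ⟨k, B⟩ :=
  cR (oe (C.pb_ft A B f)) (C.p (C.pb A B f))

theorem cast_p_eq_pC {n k : ℕ} (A : C.Ob (n + 1)) (B : C.Ob k)
    (f : C.Hom ⟨k, B⟩ ⟨n, C.ft A⟩) (h : C.Hom ⟨k + 1, C.pb A B f⟩ ⟨k, C.ft (C.pb A B f)⟩ =
      C.Hom ⟨k + 1, C.pb A B f⟩ ⟨k, B⟩) :
    (cast h (C.p (C.pb A B f)) : C.Hom ⟨k + 1, C.pb A B f⟩ ⟨k, B⟩) = pC A B f :=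
  cast_hom_cR (oe (C.pb_ft A B f)) h _

theorem square' {n k : ℕ} (A : C.Ob (n + 1)) (B : C.Ob k) (f : C.Hom ⟨k, B⟩ ⟨n, C.ft A⟩) :
    C.comp (C.q A B f) (C.p A) = C.comp (pC A B f) f := by
  rw [C.square A B f, cast_p_eq_pC]

theorem cartesian' {n k : ℕ} (A : C.Ob (n + 1)) (B : C.Ob k) (f : C.Hom ⟨k, B⟩ ⟨n, C.ft A⟩)
    {X : Obj C} (g : C.Hom X ⟨n + 1, A⟩) (h : C.Hom X ⟨k, B⟩)
    (hsq : C.comp g (C.p A) = C.comp h f) :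
    ∃! u : C.Hom X ⟨k + 1, C.pb A B f⟩, C.comp u (C.q A B f) = g ∧ C.comp u (pC A B f) = h := by
  have := C.cartesian A B f g h hsq
  rwa [cast_p_eq_pC] at this

/-- Extensionality for maps into a pullback. -/
theorem pb_hom_ext {n k : ℕ} (A : C.Ob (n + 1)) (B : C.Ob k) (f : C.Hom ⟨k, B⟩ ⟨n, C.ft A⟩)
    {X : Obj C} {u₁ u₂ : C.Hom X ⟨k + 1, C.pb A B f⟩}
    (hq : C.comp u₁ (C.q A B f) = C.comp u₂ (C.q A B f))
    (hp : C.comp u₁ (pC A B f) = C.comp u₂ (pC A B f)) : u₁ = u₂ := by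
  have hsq : C.comp (C.comp u₁ (C.q A B f)) (C.p A) = C.comp (C.comp u₁ (pC A B f)) f := by
    rw [C.assoc, C.assoc, square' A B f]
  obtain ⟨u, -, huniq⟩ := cartesian' A B f (C.comp u₁ (C.q A B f)) (C.comp u₁ (pC A B f)) hsq
  rw [huniq u₁ ⟨rfl, rfl⟩, huniq u₂ ⟨hq.symm, hp.symm⟩]

/-- Bundled morphisms, for equational reasoning across object equalities. -/
def Mor (C : CtxCat.{u}) := Σ X Y : Obj C, C.Hom X Y

def mor {X Y : Obj C} (f : C.Hom X Y) : Mor C := ⟨X, Y, f⟩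

theorem mor_iff {X X' Y Y' : Obj C} {f : C.Hom X Y} {f' : C.Hom X' Y'} :
    mor f = mor f' ↔ X = X' ∧ Y = Y' ∧ HEq f f' := by
  constructor
  · intro h
    obtain ⟨h1, h2⟩ := Sigma.mk.inj_iff.mp h
    subst h1
    obtain ⟨h3, h4⟩ := Sigma.mk.inj_iff.mp (eq_of_heq h2)
    subst h3
    exact ⟨rfl, rfl, h4⟩
  · rintro ⟨rfl, rfl, h⟩
    rw [eq_of_heq h]

theorem mor_mk {X X' Y Y' : Obj C} {f : C.Hom X Y} {f' : C.Hom X' Y'}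
    (ex : X = X') (ey : Y = Y') (h : HEq f f') : mor f = mor f' :=
  mor_iff.mpr ⟨ex, ey, h⟩

theorem mor_ext {X Y : Obj C} {f g : C.Hom X Y} (h : mor f = mor g) : f = g :=
  eq_of_heq (mor_iff.mp h).2.2

theorem mor_heq {X X' Y Y' : Obj C} {f : C.Hom X Y} {f' : C.Hom X' Y'}
    (h : mor f = mor f') : HEq f f' := (mor_iff.mp h).2.2

theorem mor_src {X X' Y Y' : Obj C} {f : C.Hom X Y} {f' : C.Hom X' Y'}
    (h : mor f = mor f') : X = X' := (mor_iff.mp h).1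

theorem mor_tgt {X X' Y Y' : Obj C} {f : C.Hom X Y} {f' : C.Hom X' Y'}
    (h : mor f = mor f') : Y = Y' := (mor_iff.mp h).2.1

theorem mor_comp {X X' Y Y' Z Z' : Obj C} {f : C.Hom X Y} {f' : C.Hom X' Y'}
    {g : C.Hom Y Z} {g' : C.Hom Y' Z'} (hf : mor f = mor f') (hg : mor g = mor g') :
    mor (C.comp f g) = mor (C.comp f' g') := by
  obtain ⟨e1, e2, h1⟩ := mor_iff.mp hf
  obtain ⟨e3, e4, h2⟩ := mor_iff.mp hg
  subst e1; subst e2; subst e4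
  rw [eq_of_heq h1, eq_of_heq h2]

@[simp] theorem mor_cR {X Y Y' : Obj C} (e : Y = Y') (f : C.Hom X Y) :
    mor (cR e f) = mor f := by subst e; rfl

@[simp] theorem mor_cL {X X' Y : Obj C} (e : X = X') (f : C.Hom X Y) :
    mor (cL e f) = mor f := by subst e; rfl

theorem mor_p {n : ℕ} {A A' : C.Ob (n + 1)} (e : A = A') : mor (C.p A) = mor (C.p A') := by
  subst e; rfl

theorem mor_q {n k : ℕ} {A A' : C.Ob (n + 1)} {B B' : C.Ob k}
    {f : C.Hom ⟨k, B⟩ ⟨n, C.ft A⟩} {f' : C.Hom ⟨k, B'⟩ ⟨n, C.ft A'⟩}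
    (eA : A = A') (eB : B = B') (hf : HEq f f') : mor (C.q A B f) = mor (C.q A' B' f') := by
  subst eA; subst eB; rw [eq_of_heq hf]

theorem mor_id {n : ℕ} {A A' : C.Ob n} (e : A = A') :
    mor (C.id ⟨n, A⟩) = mor (C.id ⟨n, A'⟩) := by subst e; rfl

/-- `ft` as the function required by `ftLe'`. -/
abbrev ftF (C : CtxCat.{u}) : ∀ n, C.Ob (n + 1) → C.Ob n := fun _ A => C.ft A

theorem ftLe'_last {k : ℕ} (h : k ≤ k) (A : C.Ob k) : ftLe' (ftF C) h A = A := by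
  cases k with
  | zero => rfl
  | succ k =>
    show (if hm : k + 1 = k + 1 then _ else _) = A
    rw [dif_pos rfl]
    exact cast_eq _ _

theorem ftLe'_of_le {k m : ℕ} (h : m ≤ k + 1) (hm : m ≤ k) (A : C.Ob (k + 1)) :
    ftLe' (ftF C) h A = ftLe' (ftF C) hm (C.ft A) := by
  show (if hmm : m = k + 1 then _ else _) = _
  rw [dif_neg (by omega)]

theorem ft_ftLe' {m : ℕ} : ∀ {k : ℕ} (h : m + 1 ≤ k) (A : C.Ob k),
    C.ft (ftLe' (ftF C) h A) = ftLe' (ftF C) (by omega) A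
  | 0, h, _ => by omega
  | k + 1, h, A => by
    by_cases hm : m + 1 = k + 1
    · have hm' : m = k := by omega
      subst hm'
      rw [ftLe'_last h A, ftLe'_of_le (by omega) (le_refl m) A, ftLe'_last]
    · rw [ftLe'_of_le h (by omega) A, ft_ftLe' (by omega) (C.ft A),
        ftLe'_of_le (by omega) (by omega) A]

/-- Iterated projections `p^{k-m} : A → ft^{k-m}(A)`. -/
noncomputable def pIter : ∀ {k m : ℕ} (h : m ≤ k) (A : C.Ob k),
    C.Hom ⟨k, A⟩ ⟨m, ftLe' (ftF C) h A⟩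
  | 0, m, h, A =>
    cR (show (⟨0, A⟩ : Obj C) = ⟨m, ftLe' (ftF C) h A⟩ by
      have hm : m = 0 := Nat.le_zero.mp h
      subst hm; exact (oe (ftLe'_last h A)).symm) (C.id ⟨0, A⟩)
  | k + 1, m, h, A =>
    if hm : m = k + 1 then
      cR (show (⟨k + 1, A⟩ : Obj C) = ⟨m, ftLe' (ftF C) h A⟩ by
        subst hm; exact (oe (ftLe'_last h A)).symm) (C.id ⟨k + 1, A⟩)
    else
      cR (oe (ftLe'_of_le h (by omega) A).symm)
        (C.comp (C.p A) (pIter (by omega) (C.ft A)))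

theorem pIter_last {k : ℕ} (h : k ≤ k) (A : C.Ob k) :
    mor (pIter h A) = mor (C.id ⟨k, A⟩) := by
  cases k with
  | zero => rw [pIter, mor_cR]
  | succ k => rw [pIter, dif_pos rfl, mor_cR]

theorem pIter_of_le {k m : ℕ} (h : m ≤ k + 1) (hm : m ≤ k) (A : C.Ob (k + 1)) :
    mor (pIter h A) = mor (C.comp (C.p A) (pIter hm (C.ft A))) := by
  rw [pIter, dif_neg (by omega), mor_cR]

theorem pIter_p {m : ℕ} : ∀ {k : ℕ} (h : m + 1 ≤ k) (A : C.Ob k),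
    mor (C.comp (pIter h A) (C.p (ftLe' (ftF C) h A))) = mor (pIter (by omega : m ≤ k) A)
  | 0, h, _ => by omega
  | k + 1, h, A => by
    by_cases hm : m + 1 = k + 1
    · have hm' : m = k := by omega
      subst hm'
      calc mor (C.comp (pIter h A) (C.p (ftLe' (ftF C) h A)))
          = mor (C.comp (C.id ⟨m + 1, A⟩) (C.p A)) :=
            mor_comp (pIter_last h A) (mor_p (ftLe'_last h A))
        _ = mor (C.p A) := by rw [C.id_comp]
        _ = mor (C.comp (C.p A) (C.id ⟨m, C.ft A⟩)) := by rw [C.comp_id]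
        _ = mor (C.comp (C.p A) (pIter (le_refl m) (C.ft A))) :=
            mor_comp rfl (pIter_last (le_refl m) (C.ft A)).symm
        _ = mor (pIter (by omega : m ≤ m + 1) A) := (pIter_of_le _ _ A).symm
    · have hm1 : m + 1 ≤ k := by omega
      calc mor (C.comp (pIter h A) (C.p (ftLe' (ftF C) h A)))
          = mor (C.comp (C.comp (C.p A) (pIter hm1 (C.ft A)))
              (C.p (ftLe' (ftF C) hm1 (C.ft A)))) :=
            mor_comp (pIter_of_le h hm1 A) (mor_p (ftLe'_of_le h hm1 A))
        _ = mor (C.comp (C.p A) (C.comp (pIter hm1 (C.ft A))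
              (C.p (ftLe' (ftF C) hm1 (C.ft A))))) := by rw [C.assoc]
        _ = mor (C.comp (C.p A) (pIter (by omega : m ≤ k) (C.ft A))) :=
            mor_comp rfl (pIter_p hm1 (C.ft A))
        _ = mor (pIter (by omega : m ≤ k + 1) A) := (pIter_of_le _ (by omega) A).symm

/-- Terms of length `k`: a type `A` of length `k+1` together with a section of `p_A`. -/
def Tm' (C : CtxCat.{u}) (k : ℕ) : Type u :=
  Σ A : C.Ob (k + 1), { s : C.Hom ⟨k, C.ft A⟩ ⟨k + 1, A⟩ //
    C.comp s (C.p A) = C.id ⟨k, C.ft A⟩ }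

theorem Tm'_ext {k : ℕ} {t t' : Tm' C k} (h1 : t.1 = t'.1)
    (h2 : mor t.2.1 = mor t'.2.1) : t = t' := by
  obtain ⟨A, s, hs⟩ := t
  obtain ⟨A', s', hs'⟩ := t'
  simp only at h1
  subst h1
  simp only at h2
  exact congrArg _ (Subtype.ext (mor_ext h2))

/-- The universal map into a pullback induced by `g` lying over the identity. -/
noncomputable def mkU {m k : ℕ} (A : C.Ob (m + 1)) (B : C.Ob k)
    (f : C.Hom ⟨k, B⟩ ⟨m, C.ft A⟩) (g : C.Hom ⟨k, B⟩ ⟨m + 1, A⟩)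
    (hg : C.comp g (C.p A) = f) : C.Hom ⟨k, B⟩ ⟨k + 1, C.pb A B f⟩ :=
  (cartesian' A B f g (C.id ⟨k, B⟩) (by rw [hg, C.id_comp])).choose

theorem mkU_q {m k : ℕ} (A : C.Ob (m + 1)) (B : C.Ob k)
    (f : C.Hom ⟨k, B⟩ ⟨m, C.ft A⟩) (g : C.Hom ⟨k, B⟩ ⟨m + 1, A⟩)
    (hg : C.comp g (C.p A) = f) : C.comp (mkU A B f g hg) (C.q A B f) = g :=
  (cartesian' A B f g (C.id ⟨k, B⟩) (by rw [hg, C.id_comp])).choose_spec.1.1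

theorem mkU_p {m k : ℕ} (A : C.Ob (m + 1)) (B : C.Ob k)
    (f : C.Hom ⟨k, B⟩ ⟨m, C.ft A⟩) (g : C.Hom ⟨k, B⟩ ⟨m + 1, A⟩)
    (hg : C.comp g (C.p A) = f) : C.comp (mkU A B f g hg) (pC A B f) = C.id ⟨k, B⟩ :=
  (cartesian' A B f g (C.id ⟨k, B⟩) (by rw [hg, C.id_comp])).choose_spec.1.2

theorem mkU_unique {m k : ℕ} (A : C.Ob (m + 1)) (B : C.Ob k)
    (f : C.Hom ⟨k, B⟩ ⟨m, C.ft A⟩) (g : C.Hom ⟨k, B⟩ ⟨m + 1, A⟩)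
    (hg : C.comp g (C.p A) = f) (u : C.Hom ⟨k, B⟩ ⟨k + 1, C.pb A B f⟩)
    (h1 : C.comp u (C.q A B f) = g) (h2 : C.comp u (pC A B f) = C.id ⟨k, B⟩) :
    u = mkU A B f g hg :=
  (cartesian' A B f g (C.id ⟨k, B⟩) (by rw [hg, C.id_comp])).choose_spec.2 u ⟨h1, h2⟩

/-- The term `(f^*(A), s)` induced by a map `g : B → A` lying over `f`. -/
noncomputable def mkTm {m k : ℕ} (A : C.Ob (m + 1)) (B : C.Ob k)
    (f : C.Hom ⟨k, B⟩ ⟨m, C.ft A⟩) (g : C.Hom ⟨k, B⟩ ⟨m + 1, A⟩)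
    (hg : C.comp g (C.p A) = f) : Tm' C k :=
  ⟨C.pb A B f, cL (oe (C.pb_ft A B f)).symm (mkU A B f g hg), by
    apply mor_ext
    calc mor (C.comp (cL (oe (C.pb_ft A B f)).symm (mkU A B f g hg)) (C.p (C.pb A B f)))
        = mor (C.comp (mkU A B f g hg) (pC A B f)) :=
          mor_comp (mor_cL _ _) (mor_cR _ _).symm
      _ = mor (C.id ⟨k, B⟩) := by rw [mkU_p]
      _ = mor (C.id ⟨k, C.ft (C.pb A B f)⟩) := mor_id (C.pb_ft A B f).symm⟩

@[simp] theorem mkTm_ty {m k : ℕ} (A : C.Ob (m + 1)) (B : C.Ob k)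
    (f : C.Hom ⟨k, B⟩ ⟨m, C.ft A⟩) (g : C.Hom ⟨k, B⟩ ⟨m + 1, A⟩)
    (hg : C.comp g (C.p A) = f) : (mkTm A B f g hg).1 = C.pb A B f := rfl

theorem mkTm_sec {m k : ℕ} (A : C.Ob (m + 1)) (B : C.Ob k)
    (f : C.Hom ⟨k, B⟩ ⟨m, C.ft A⟩) (g : C.Hom ⟨k, B⟩ ⟨m + 1, A⟩)
    (hg : C.comp g (C.p A) = f) : mor (mkTm A B f g hg).2.1 = mor (mkU A B f g hg) :=
  mor_cL _ _

theorem ftty {k n : ℕ} {T : C.Ob (n + 1)} {A : C.Ob (k + 1)} {B : C.Ob n}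
    {f : C.Hom ⟨n, B⟩ ⟨k, C.ft A⟩} (h : T = C.pb A B f) : C.ft T = B := by
  rw [h]; exact C.pb_ft A B f

/-- The partial interpretation of a tuple of terms as a morphism `B → A`. -/
noncomputable def alphaP (n : ℕ) (B : C.Ob n) :
    ∀ (k : ℕ) (A : C.Ob k) (_ : Fin k → Tm' C n), Part (C.Hom ⟨n, B⟩ ⟨k, A⟩)
  | 0, A, _ => Part.some (cR (oe (C.pt_unique A).symm) (C.toPt ⟨n, B⟩))
  | k + 1, A, a =>
    (alphaP n B k (C.ft A) fun j => a j.castSucc).bind fun f =>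
      Part.assert ((a (Fin.last k)).1 = C.pb A B f) fun h =>
        Part.some (C.comp (cL (oe (ftty h)) (cR (oe h) (a (Fin.last k)).2.1)) (C.q A B f))

theorem mem_alphaP_zero {n : ℕ} {B : C.Ob n} {A : C.Ob 0} {a : Fin 0 → Tm' C n}
    {g : C.Hom ⟨n, B⟩ ⟨0, A⟩} :
    g ∈ alphaP n B 0 A a ↔ g = cR (oe (C.pt_unique A).symm) (C.toPt ⟨n, B⟩) := by
  rw [alphaP]; exact Part.mem_some_iff

theorem mem_alphaP_succ {n k : ℕ} {B : C.Ob n} {A : C.Ob (k + 1)} {a : Fin (k + 1) → Tm' C n}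
    {g : C.Hom ⟨n, B⟩ ⟨k + 1, A⟩} :
    g ∈ alphaP n B (k + 1) A a ↔
      ∃ f ∈ alphaP n B k (C.ft A) fun j => a j.castSucc,
        ∃ h : (a (Fin.last k)).1 = C.pb A B f,
          g = C.comp (cL (oe (ftty h)) (cR (oe h) (a (Fin.last k)).2.1)) (C.q A B f) := by
  rw [alphaP]
  simp only [Part.mem_bind_iff, Part.mem_assert_iff, Part.mem_some_iff]

/-- Substitution on types: pullback along the interpreted tuple. -/
noncomputable def substTy' (n k : ℕ) (B : C.Ob n) (A : C.Ob (k + 1))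
    (a : Fin k → Tm' C n) : Part (C.Ob (n + 1)) :=
  (alphaP n B k (C.ft A) a).map (C.pb A B)

/-- Substitution on terms: the term induced by `s_b ∘ α(a)`. -/
noncomputable def substTm' (n k : ℕ) (B : C.Ob n) (b : Tm' C k)
    (a : Fin k → Tm' C n) : Part (Tm' C n) :=
  (alphaP n B k (C.ft b.1) a).map fun f =>
    mkTm b.1 B f (C.comp f b.2.1) (by rw [C.assoc, b.2.2, C.comp_id])

theorem vle {n i : ℕ} (hi : i < n) : n - i - 1 + 1 ≤ n := by omega

/-- The variables: `v_{n,i}(A)` is the section `s_{p^i_A}` of the weakened type. -/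
noncomputable def vDef (n i : ℕ) (hi : i < n) (A : C.Ob n) : Tm' C n :=
  mkTm (ftLe' (ftF C) (vle hi) A) A
    (cR (oe (ft_ftLe' (vle hi) A).symm) (pIter (by omega) A))
    (pIter (vle hi) A)
    (mor_ext ((pIter_p (vle hi) A).trans (mor_cR _ _).symm))

theorem hom_to_zero_ext {X : Obj C} {A₀ : C.Ob 0} (f g : C.Hom X ⟨0, A₀⟩) : f = g := by
  apply mor_ext
  have h1 : cR (oe (C.pt_unique A₀)) f = cR (oe (C.pt_unique A₀)) g := by
    rw [C.toPt_unique X (cR (oe (C.pt_unique A₀)) f), C.toPt_unique X (cR (oe (C.pt_unique A₀)) g)]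
  calc mor f = mor (cR (oe (C.pt_unique A₀)) f) := (mor_cR _ _).symm
    _ = mor (cR (oe (C.pt_unique A₀)) g) := by rw [h1]
    _ = mor g := mor_cR _ _

/-- Heterogeneous congruence for `ftLe'`. -/
theorem ftLe'_congr {k m m' : ℕ} (e : m = m') (h : m ≤ k) (h' : m' ≤ k) (A : C.Ob k) :
    HEq (ftLe' (ftF C) h A) (ftLe' (ftF C) h' A) := by subst e; rfl

theorem pIter_congr {k m m' : ℕ} (e : m = m') (h : m ≤ k) (h' : m' ≤ k) (A : C.Ob k) :
    mor (pIter h A) = mor (pIter h' A) := by subst e; rfl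

/-- Heterogeneous congruence for pullbacks. -/
theorem pb_congr' {m m' k k' : ℕ} {A : C.Ob (m + 1)} {A' : C.Ob (m' + 1)}
    {B : C.Ob k} {B' : C.Ob k'} {f : C.Hom ⟨k, B⟩ ⟨m, C.ft A⟩} {f' : C.Hom ⟨k', B'⟩ ⟨m', C.ft A'⟩}
    (em : m = m') (hA : HEq A A') (ek : k = k') (hB : HEq B B') (hf : mor f = mor f') :
    HEq (C.pb A B f) (C.pb A' B' f') := by
  subst em; subst ek
  have eA := eq_of_heq hA; subst eA
  have eB := eq_of_heq hB; subst eB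
  rw [mor_ext hf]

/-- Heterogeneous congruence for connecting maps. -/
theorem mor_q' {m m' k k' : ℕ} {A : C.Ob (m + 1)} {A' : C.Ob (m' + 1)}
    {B : C.Ob k} {B' : C.Ob k'} {f : C.Hom ⟨k, B⟩ ⟨m, C.ft A⟩} {f' : C.Hom ⟨k', B'⟩ ⟨m', C.ft A'⟩}
    (em : m = m') (hA : HEq A A') (ek : k = k') (hB : HEq B B') (hf : mor f = mor f') :
    mor (C.q A B f) = mor (C.q A' B' f') := by
  subst em; subst ek
  have eA := eq_of_heq hA; subst eA
  have eB := eq_of_heq hB; subst eB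
  rw [mor_ext hf]

theorem alphaP_congr {n k : ℕ} {B : C.Ob n} {A A' : C.Ob k} (e : A = A')
    {a a' : Fin k → Tm' C n} (ha : a = a') {g : C.Hom ⟨n, B⟩ ⟨k, A⟩} {g' : C.Hom ⟨n, B⟩ ⟨k, A'⟩}
    (hgg : mor g = mor g') (hg : g ∈ alphaP n B k A a) : g' ∈ alphaP n B k A' a' := by
  subst e; subst ha
  rwa [← mor_ext hgg]

theorem alphaP_mor_unique {n k : ℕ} {B : C.Ob n} {A A' : C.Ob k} (e : A = A')
    {a a' : Fin k → Tm' C n} (ha : a = a') {g : C.Hom ⟨n, B⟩ ⟨k, A⟩} {g' : C.Hom ⟨n, B⟩ ⟨k, A'⟩}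
    (hg : g ∈ alphaP n B k A a) (hg' : g' ∈ alphaP n B k A' a') : mor g = mor g' := by
  subst e; subst ha
  rw [Part.mem_unique hg hg']

theorem mem_substTy' {n k : ℕ} {B : C.Ob n} {A : C.Ob (k + 1)} {a : Fin k → Tm' C n}
    {T : C.Ob (n + 1)} :
    T ∈ substTy' n k B A a ↔ ∃ f ∈ alphaP n B k (C.ft A) a, C.pb A B f = T :=
  Part.mem_map_iff _

theorem mem_substTm' {n k : ℕ} {B : C.Ob n} {b : Tm' C k} {a : Fin k → Tm' C n}
    {t : Tm' C n} :
    t ∈ substTm' n k B b a ↔ ∃ f ∈ alphaP n B k (C.ft b.1) a,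
      mkTm b.1 B f (C.comp f b.2.1) (by rw [C.assoc, b.2.2, C.comp_id]) = t :=
  Part.mem_map_iff _

/-- The `Hom` predicate, in terms of the model's data. -/
def Homp (n k : ℕ) (B : C.Ob n) (A : C.Ob k) (a : Fin k → Tm' C n) : Prop :=
  ∀ i : Fin k, (a i).1 ∈ substTy' n i B (ftLe' (ftF C) (Nat.succ_le_of_lt i.isLt) A)
    fun j => a (Fin.castLE (le_of_lt i.isLt) j)

theorem dom_iff {n : ℕ} {B : C.Ob n} :
    ∀ {k : ℕ} {A : C.Ob k} {a : Fin k → Tm' C n},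
      (alphaP n B k A a).Dom ↔ Homp n k B A a
  | 0, A, a => by
    rw [alphaP]
    simp only [Part.some_dom, true_iff]
    intro i
    exact i.elim0
  | k + 1, A, a => by
    rw [Part.dom_iff_mem]
    constructor
    · rintro ⟨g, hg⟩
      rw [mem_alphaP_succ] at hg
      obtain ⟨f, hf, h, -⟩ := hg
      have hdomk : Homp n k B (C.ft A) fun j => a j.castSucc :=
        dom_iff.mp (Part.dom_iff_mem.mpr ⟨f, hf⟩)
      intro i
      refine Fin.lastCases ?_ ?_ i
      · show (a (Fin.last k)).1 ∈ substTy' n k B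
          (ftLe' (ftF C) (by omega) A) fun j => a j.castSucc
        rw [ftLe'_last]
        exact mem_substTy'.mpr ⟨f, hf, h.symm⟩
      · intro i
        show (a i.castSucc).1 ∈ substTy' n i.1 B
          (ftLe' (ftF C) (by omega : i.1 + 1 ≤ k + 1) A)
          fun j => a (Fin.castLE (by omega : i.1 ≤ k + 1) j)
        rw [ftLe'_of_le (by omega) (by omega : i.1 + 1 ≤ k)]
        exact hdomk i
    · intro hH
      have hlast := hH (Fin.last k)
      rw [show (ftLe' (ftF C) (Nat.succ_le_of_lt (Fin.last k).isLt) A :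
            C.Ob (Fin.last k + 1)) = A from ftLe'_last _ A] at hlast
      obtain ⟨f, hf, h⟩ := mem_substTy'.mp hlast
      exact ⟨_, mem_alphaP_succ.mpr ⟨f, hf, h.symm, rfl⟩⟩

theorem alphaP_p {n k : ℕ} {B : C.Ob n} {A : C.Ob (k + 1)} {a : Fin (k + 1) → Tm' C n}
    {g : C.Hom ⟨n, B⟩ ⟨k + 1, A⟩} (hg : g ∈ alphaP n B (k + 1) A a) :
    C.comp g (C.p A) ∈ alphaP n B k (C.ft A) fun j => a j.castSucc := by
  obtain ⟨f, hf, h, hge⟩ := mem_alphaP_succ.mp hg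
  have hs : mor (C.comp (cL (oe (ftty h)) (cR (oe h) (a (Fin.last k)).2.1)) (pC A B f)) =
      mor (C.id ⟨n, B⟩) :=
    calc mor (C.comp (cL (oe (ftty h)) (cR (oe h) (a (Fin.last k)).2.1)) (pC A B f))
        = mor (C.comp (a (Fin.last k)).2.1 (C.p (a (Fin.last k)).1)) :=
          mor_comp ((mor_cL _ _).trans (mor_cR _ _)) ((mor_cR _ _).trans (mor_p h.symm))
      _ = mor (C.id ⟨n, C.ft (a (Fin.last k)).1⟩) := by rw [(a (Fin.last k)).2.2]
      _ = mor (C.id ⟨n, B⟩) := mor_id (ftty h)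
  have key : C.comp g (C.p A) = f := by
    apply mor_ext
    calc mor (C.comp g (C.p A))
        = mor (C.comp (C.comp (cL (oe (ftty h)) (cR (oe h) (a (Fin.last k)).2.1)) (C.q A B f))
            (C.p A)) := by rw [← hge]
      _ = mor (C.comp (cL (oe (ftty h)) (cR (oe h) (a (Fin.last k)).2.1))
            (C.comp (C.q A B f) (C.p A))) := by rw [C.assoc]
      _ = mor (C.comp (cL (oe (ftty h)) (cR (oe h) (a (Fin.last k)).2.1))
            (C.comp (pC A B f) f)) := by rw [square']
      _ = mor (C.comp (C.comp (cL (oe (ftty h)) (cR (oe h) (a (Fin.last k)).2.1))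
            (pC A B f)) f) := by rw [C.assoc]
      _ = mor (C.comp (C.id ⟨n, B⟩) f) := mor_comp hs rfl
      _ = mor f := by rw [C.id_comp]
  rwa [key]

theorem alphaP_pIter {n : ℕ} {B : C.Ob n} :
    ∀ {k : ℕ} {A : C.Ob k} {a : Fin k → Tm' C n} {g : C.Hom ⟨n, B⟩ ⟨k, A⟩}
      (_ : g ∈ alphaP n B k A a) {m : ℕ} (h : m ≤ k),
      C.comp g (pIter h A) ∈ alphaP n B m (ftLe' (ftF C) h A) fun j => a (Fin.castLE h j)
  | 0, A, a, g, hg, m, h => by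
    have hm : m = 0 := Nat.le_zero.mp h
    subst hm
    refine alphaP_congr (ftLe'_last h A).symm rfl ?_ hg
    calc mor g = mor (C.comp g (C.id ⟨0, A⟩)) := by rw [C.comp_id]
      _ = mor (C.comp g (pIter h A)) := mor_comp rfl (pIter_last h A).symm
  | k + 1, A, a, g, hg, m, h => by
    rcases Nat.eq_or_lt_of_le h with he | hlt
    · subst he
      refine alphaP_congr (ftLe'_last h A).symm rfl ?_ hg
      calc mor g = mor (C.comp g (C.id ⟨k + 1, A⟩)) := by rw [C.comp_id]
        _ = mor (C.comp g (pIter h A)) := mor_comp rfl (pIter_last h A).symm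
    · have hm : m ≤ k := by omega
      have h1 : C.comp g (C.p A) ∈ alphaP n B k (C.ft A) fun j => a j.castSucc := alphaP_p hg
      have h2 := alphaP_pIter h1 hm
      refine alphaP_congr (ftLe'_of_le h hm A).symm rfl ?_ h2
      calc mor (C.comp (C.comp g (C.p A)) (pIter hm (C.ft A)))
          = mor (C.comp g (C.comp (C.p A) (pIter hm (C.ft A)))) := by rw [C.assoc]
        _ = mor (C.comp g (pIter h A)) := mor_comp rfl (pIter_of_le h hm A).symm

/-- `pb_comp` with normalized casts. -/
theorem pb_comp' {n k m : ℕ} (A : C.Ob (n + 1)) (B : C.Ob k) (f : C.Hom ⟨k, B⟩ ⟨n, C.ft A⟩)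
    (Cm : C.Ob m) (g : C.Hom ⟨m, Cm⟩ ⟨k, B⟩) :
    C.pb A Cm (C.comp g f) = C.pb (C.pb A B f) Cm (cR (oe (C.pb_ft A B f)).symm g) := by
  have e := C.pb_comp A B f Cm g
  rwa [cast_hom_cR (oe (C.pb_ft A B f)).symm] at e

/-- `q_comp` with normalized casts, in `mor` form. -/
theorem mor_q_comp {n k m : ℕ} (A : C.Ob (n + 1)) (B : C.Ob k) (f : C.Hom ⟨k, B⟩ ⟨n, C.ft A⟩)
    (Cm : C.Ob m) (g : C.Hom ⟨m, Cm⟩ ⟨k, B⟩) :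
    mor (C.q A Cm (C.comp g f)) =
      mor (C.comp (C.q (C.pb A B f) Cm (cR (oe (C.pb_ft A B f)).symm g)) (C.q A B f)) := by
  have h := C.q_comp A B f Cm g
  rw [cast_hom_cR (oe (C.pb_ft A B f)).symm] at h
  exact mor_mk (oe (pb_comp' A B f Cm g)) rfl h

theorem mor_q_id {n : ℕ} (A : C.Ob (n + 1)) :
    mor (C.q A (C.ft A) (C.id ⟨n, C.ft A⟩)) = mor (C.id ⟨n + 1, A⟩) :=
  mor_mk (oe (C.pb_id A)) rfl (C.q_id A)

/-- The section of a `mkTm`, cast along a different presentation of the pullback, composed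
with the corresponding connecting map, recovers `g`. -/
theorem mkTm_comp_q {m m' k : ℕ} (A : C.Ob (m + 1)) {A' : C.Ob (m' + 1)} (B : C.Ob k)
    (f : C.Hom ⟨k, B⟩ ⟨m, C.ft A⟩) {f' : C.Hom ⟨k, B⟩ ⟨m', C.ft A'⟩}
    (g : C.Hom ⟨k, B⟩ ⟨m + 1, A⟩) (hg : C.comp g (C.p A) = f)
    (em : m = m') (hA : HEq A A') (hf : mor f = mor f')
    (h2 : (mkTm A B f g hg).1 = C.pb A' B f') :
    mor (C.comp (cL (oe (ftty h2)) (cR (oe h2) (mkTm A B f g hg).2.1)) (C.q A' B f')) =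
      mor g := by
  subst em
  have eA := eq_of_heq hA; subst eA
  have ef := mor_ext hf; subst ef
  calc mor (C.comp (cL (oe (ftty h2)) (cR (oe h2) (mkTm A B f g hg).2.1)) (C.q A B f))
      = mor (C.comp (mkU A B f g hg) (C.q A B f)) :=
        mor_comp (((mor_cL _ _).trans (mor_cR _ _)).trans (mkTm_sec A B f g hg)) rfl
    _ = mor g := by rw [mkU_q]

theorem alphaP_var {n : ℕ} (A : C.Ob n) :
    ∀ {m : ℕ} (h : m ≤ n),
      pIter h A ∈ alphaP n A m (ftLe' (ftF C) h A)
        fun j : Fin m => vDef n (n - 1 - j) (by have := j.isLt; omega) A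
  | 0, h => mem_alphaP_zero.mpr (hom_to_zero_ext _ _)
  | m + 1, h => by
    have hm : m ≤ n := by omega
    have hi : n - 1 - m < n := by omega
    have em : n - (n - 1 - m) - 1 = m := by omega
    have hA : HEq (ftLe' (ftF C) (vle hi) A) (ftLe' (ftF C) h A) :=
      ftLe'_congr (by omega) _ _ A
    have hfv : mor (cR (oe (ft_ftLe' (vle hi) A).symm)
          (pIter (by omega : n - (n - 1 - m) - 1 ≤ n) A)) =
        mor (cR (oe (ft_ftLe' h A).symm) (pIter hm A)) :=
      calc mor (cR (oe (ft_ftLe' (vle hi) A).symm)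
              (pIter (by omega : n - (n - 1 - m) - 1 ≤ n) A))
          = mor (pIter (by omega : n - (n - 1 - m) - 1 ≤ n) A) := mor_cR _ _
        _ = mor (pIter hm A) := pIter_congr em _ _ A
        _ = mor (cR (oe (ft_ftLe' h A).symm) (pIter hm A)) := (mor_cR _ _).symm
    have h2 : (vDef n (n - 1 - m) hi A).1 =
        C.pb (ftLe' (ftF C) h A) A (cR (oe (ft_ftLe' h A).symm) (pIter hm A)) :=
      eq_of_heq (pb_congr' em hA rfl HEq.rfl hfv)
    refine mem_alphaP_succ.mpr ⟨cR (oe (ft_ftLe' h A).symm) (pIter hm A),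
      alphaP_congr (ft_ftLe' h A).symm rfl (mor_cR _ _).symm (alphaP_var A hm), h2, ?_⟩
    have h4 := mkTm_comp_q (ftLe' (ftF C) (vle hi) A) A
      (cR (oe (ft_ftLe' (vle hi) A).symm) (pIter (by omega) A)) (pIter (vle hi) A)
      (mor_ext ((pIter_p (vle hi) A).trans (mor_cR _ _).symm)) em hA hfv h2
    exact mor_ext ((h4.trans
      (pIter_congr (by omega : n - (n - 1 - m) - 1 + 1 = m + 1) (vle hi) h A)).symm)

theorem mkTm_comp_q' {m m' k : ℕ} (A : C.Ob (m + 1)) {A' : C.Ob (m' + 1)} (B : C.Ob k)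
    (f : C.Hom ⟨k, B⟩ ⟨m, C.ft A⟩) {f' : C.Hom ⟨k, B⟩ ⟨m', C.ft A'⟩}
    (g : C.Hom ⟨k, B⟩ ⟨m + 1, A⟩) (hg : C.comp g (C.p A) = f) (t : Tm' C k)
    (ht : t = mkTm A B f g hg)
    (em : m = m') (hA : HEq A A') (hf : mor f = mor f')
    (h2 : t.1 = C.pb A' B f') :
    mor (C.comp (cL (oe (ftty h2)) (cR (oe h2) t.2.1)) (C.q A' B f')) = mor g := by
  subst ht; exact mkTm_comp_q A B f g hg em hA hf h2

theorem alphaP_comp {n k : ℕ} {Cn : C.Ob n} {B : C.Ob k} {b : Fin k → Tm' C n}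
    {gb : C.Hom ⟨n, Cn⟩ ⟨k, B⟩} (hb : gb ∈ alphaP n Cn k B b) :
    ∀ {m : ℕ} {D : C.Ob m} {a : Fin m → Tm' C k} {c : Fin m → Tm' C n}
      {ga : C.Hom ⟨k, B⟩ ⟨m, D⟩} (_ : ga ∈ alphaP k B m D a)
      (_ : ∀ i, c i ∈ substTm' n k Cn (a i) b),
      C.comp gb ga ∈ alphaP n Cn m D c
  | 0, D, a, c, ga, ha, hc => mem_alphaP_zero.mpr (hom_to_zero_ext _ _)
  | m + 1, D, a, c, ga, ha, hc => by
    obtain ⟨fa, hfa, h1, hgae⟩ := mem_alphaP_succ.mp ha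
    obtain ⟨f, hf, hcl⟩ := mem_substTm'.mp (hc (Fin.last m))
    have hfb : mor f = mor gb := alphaP_mor_unique (ftty h1) rfl hf hb
    have IH : C.comp gb fa ∈ alphaP n Cn m (C.ft D) fun j => c j.castSucc :=
      alphaP_comp hb hfa fun i => hc i.castSucc
    have hcl1 : (c (Fin.last m)).1 = C.pb (a (Fin.last m)).1 Cn f := by rw [← hcl]; rfl
    have h2 : (c (Fin.last m)).1 = C.pb D Cn (C.comp gb fa) := by
      rw [hcl1, pb_comp' D B fa Cn gb]
      exact eq_of_heq (pb_congr' rfl (heq_of_eq h1) rfl HEq.rfl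
        (hfb.trans (mor_cR _ _).symm))
    refine mem_alphaP_succ.mpr ⟨C.comp gb fa, IH, h2, ?_⟩
    apply mor_ext
    have hmid : mor (C.comp gb (cL (oe (ftty h1)) (cR (oe h1) (a (Fin.last m)).2.1))) =
        mor (C.comp f (a (Fin.last m)).2.1) :=
      mor_comp hfb.symm ((mor_cL _ _).trans (mor_cR _ _))
    have h2' : (c (Fin.last m)).1 =
        C.pb (C.pb D B fa) Cn (cR (oe (C.pb_ft D B fa)).symm gb) :=
      h2.trans (pb_comp' D B fa Cn gb)
    have hinner := mkTm_comp_q' (a (Fin.last m)).1 Cn f (C.comp f (a (Fin.last m)).2.1)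
      (by rw [C.assoc, (a (Fin.last m)).2.2, C.comp_id]) (c (Fin.last m)) hcl.symm
      rfl (heq_of_eq h1) (hfb.trans (mor_cR _ _).symm) h2'
    calc mor (C.comp gb ga)
        = mor (C.comp (C.comp gb (cL (oe (ftty h1)) (cR (oe h1) (a (Fin.last m)).2.1)))
            (C.q D B fa)) := by rw [hgae, C.assoc]
      _ = mor (C.comp (C.comp (cL (oe (ftty h2')) (cR (oe h2') (c (Fin.last m)).2.1))
            (C.q (C.pb D B fa) Cn (cR (oe (C.pb_ft D B fa)).symm gb))) (C.q D B fa)) :=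
          mor_comp (hmid.trans hinner.symm) rfl
      _ = mor (C.comp (cL (oe (ftty h2')) (cR (oe h2') (c (Fin.last m)).2.1))
            (C.comp (C.q (C.pb D B fa) Cn (cR (oe (C.pb_ft D B fa)).symm gb))
              (C.q D B fa))) := by rw [C.assoc]
      _ = mor (C.comp (cL (oe (ftty h2)) (cR (oe h2) (c (Fin.last m)).2.1))
            (C.q D Cn (C.comp gb fa))) :=
          mor_comp (((mor_cL _ _).trans (mor_cR _ _)).trans
            (((mor_cL _ _).trans (mor_cR _ _)).symm)) (mor_q_comp D B fa Cn gb).symm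

/-- Extensionality: a term whose section behaves like the one induced by `g` is that term. -/
theorem mkTm_eq {m k : ℕ} (A : C.Ob (m + 1)) (B : C.Ob k)
    (f : C.Hom ⟨k, B⟩ ⟨m, C.ft A⟩) (g : C.Hom ⟨k, B⟩ ⟨m + 1, A⟩)
    (hg : C.comp g (C.p A) = f) (t : Tm' C k) (h2 : t.1 = C.pb A B f)
    (hq : mor (C.comp (cL (oe (ftty h2)) (cR (oe h2) t.2.1)) (C.q A B f)) = mor g) :
    mkTm A B f g hg = t := by
  have hp : C.comp (cL (oe (ftty h2)) (cR (oe h2) t.2.1)) (pC A B f) = C.id ⟨k, B⟩ := by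
    apply mor_ext
    calc mor (C.comp (cL (oe (ftty h2)) (cR (oe h2) t.2.1)) (pC A B f))
        = mor (C.comp t.2.1 (C.p t.1)) :=
          mor_comp ((mor_cL _ _).trans (mor_cR _ _)) ((mor_cR _ _).trans (mor_p h2.symm))
      _ = mor (C.id ⟨k, C.ft t.1⟩) := by rw [t.2.2]
      _ = mor (C.id ⟨k, B⟩) := mor_id (ftty h2)
  have hu := mkU_unique A B f g hg _ (mor_ext hq) hp
  refine (Tm'_ext h2 ?_).symm
  calc mor t.2.1 = mor (cL (oe (ftty h2)) (cR (oe h2) t.2.1)) :=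
        ((mor_cL _ _).trans (mor_cR _ _)).symm
    _ = mor (mkU A B f g hg) := by rw [hu]
    _ = mor (mkTm A B f g hg).2.1 := (mkTm_sec A B f g hg).symm

theorem alphaP_congrB {n k : ℕ} {B B' : C.Ob n} (e : B = B') {A : C.Ob k}
    {a : Fin k → Tm' C n} {g : C.Hom ⟨n, B⟩ ⟨k, A⟩} {g' : C.Hom ⟨n, B'⟩ ⟨k, A⟩}
    (hgg : mor g = mor g') (hg : g ∈ alphaP n B k A a) : g' ∈ alphaP n B' k A a := by
  subst e; rwa [← mor_ext hgg]

theorem alphaP_id {n : ℕ} (B : C.Ob n) :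
    C.id ⟨n, B⟩ ∈ alphaP n B n B fun j : Fin n =>
      vDef n (n - 1 - j) (by have := j.isLt; omega) B :=
  alphaP_congr (ftLe'_last (le_refl n) B) rfl (pIter_last (le_refl n) B)
    (alphaP_var B (le_refl n))

theorem substTy'_eq_some {n k : ℕ} {B : C.Ob n} (A : C.Ob (k + 1)) (a : Fin k → Tm' C n)
    {f : C.Hom ⟨n, B⟩ ⟨k, C.ft A⟩} (hf : f ∈ alphaP n B k (C.ft A) a) :
    substTy' n k B A a = Part.some (C.pb A B f) := by
  apply Part.ext; intro T
  rw [mem_substTy', Part.mem_some_iff]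
  constructor
  · rintro ⟨f', hf', he⟩; rw [← he, Part.mem_unique hf' hf]
  · rintro rfl; exact ⟨f, hf, rfl⟩

theorem substTm'_eq_some {n k : ℕ} {B : C.Ob n} (b : Tm' C k) (a : Fin k → Tm' C n)
    {f : C.Hom ⟨n, B⟩ ⟨k, C.ft b.1⟩} (hf : f ∈ alphaP n B k (C.ft b.1) a) :
    substTm' n k B b a =
      Part.some (mkTm b.1 B f (C.comp f b.2.1) (by rw [C.assoc, b.2.2, C.comp_id])) := by
  apply Part.ext; intro t
  rw [mem_substTm', Part.mem_some_iff]
  constructor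
  · rintro ⟨f', hf', he⟩
    rw [← he]
    have hff : f' = f := Part.mem_unique hf' hf
    subst hff; rfl
  · rintro rfl; exact ⟨f, hf, rfl⟩

/-- Reconstruct a tuple of terms from a morphism. -/
noncomputable def toTuple {n : ℕ} (B : C.Ob n) :
    ∀ {k : ℕ} {A : C.Ob k}, C.Hom ⟨n, B⟩ ⟨k, A⟩ → Fin k → Tm' C n
  | 0, _, _ => fun j => j.elim0
  | k + 1, A, g =>
    Fin.snoc (toTuple B (C.comp g (C.p A))) (mkTm A B (C.comp g (C.p A)) g rfl)

theorem toTuple_mem {n : ℕ} {B : C.Ob n} :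
    ∀ {k : ℕ} {A : C.Ob k} (g : C.Hom ⟨n, B⟩ ⟨k, A⟩), g ∈ alphaP n B k A (toTuple B g)
  | 0, A, g => mem_alphaP_zero.mpr (hom_to_zero_ext _ _)
  | k + 1, A, g => by
    have htup : (fun j : Fin k => toTuple B g j.castSucc) = toTuple B (C.comp g (C.p A)) := by
      funext j
      simp only [toTuple, Fin.snoc_castSucc]
    have hlast : toTuple B g (Fin.last k) = mkTm A B (C.comp g (C.p A)) g rfl := by
      simp only [toTuple, Fin.snoc_last]
    have h2 : (toTuple B g (Fin.last k)).1 = C.pb A B (C.comp g (C.p A)) := by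
      rw [hlast]; rfl
    refine mem_alphaP_succ.mpr ⟨C.comp g (C.p A), ?_, h2, ?_⟩
    · rw [htup]; exact toTuple_mem (C.comp g (C.p A))
    · exact (mor_ext (mkTm_comp_q' A B (C.comp g (C.p A)) g rfl (toTuple B g (Fin.last k))
        hlast rfl HEq.rfl rfl h2)).symm

theorem toTuple_eq {n : ℕ} {B : C.Ob n} :
    ∀ {k : ℕ} {A : C.Ob k} {a : Fin k → Tm' C n} (g : C.Hom ⟨n, B⟩ ⟨k, A⟩)
      (_ : g ∈ alphaP n B k A a), toTuple B g = a
  | 0, A, a, g, hg => funext fun j => j.elim0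
  | k + 1, A, a, g, hg => by
    obtain ⟨f, hf, h, hge⟩ := mem_alphaP_succ.mp hg
    have key : C.comp g (C.p A) = f := Part.mem_unique (alphaP_p hg) hf
    funext j
    refine Fin.lastCases ?_ ?_ j
    · simp only [toTuple, Fin.snoc_last]
      have h2 : (a (Fin.last k)).1 = C.pb A B (C.comp g (C.p A)) := by rw [key]; exact h
      refine mkTm_eq A B (C.comp g (C.p A)) g rfl (a (Fin.last k)) h2 ?_
      calc mor (C.comp (cL (oe (ftty h2)) (cR (oe h2) (a (Fin.last k)).2.1))
            (C.q A B (C.comp g (C.p A))))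
          = mor (C.comp (cL (oe (ftty h)) (cR (oe h) (a (Fin.last k)).2.1)) (C.q A B f)) :=
            mor_comp (((mor_cL _ _).trans (mor_cR _ _)).trans
              (((mor_cL _ _).trans (mor_cR _ _)).symm))
              (mor_q' rfl HEq.rfl rfl HEq.rfl (congrArg mor key))
        _ = mor g := by rw [← hge]
    · intro i
      simp only [toTuple, Fin.snoc_castSucc]
      exact congrFun (toTuple_eq (C.comp g (C.p A)) (alphaP_p hg)) i

/-- The bijection between compatible tuples and morphisms. -/
noncomputable def homEquiv' (n k : ℕ) (B : C.Ob n) (A : C.Ob k) :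
    { a : Fin k → Tm' C n // Homp n k B A a } ≃ C.Hom ⟨n, B⟩ ⟨k, A⟩ where
  toFun x := (alphaP n B k A x.1).get (dom_iff.mpr x.2)
  invFun g := ⟨toTuple B g, dom_iff.mp (Part.dom_iff_mem.mpr ⟨g, toTuple_mem g⟩)⟩
  left_inv x := Subtype.ext (toTuple_eq _ (Part.get_mem _))
  right_inv g := Part.get_eq_of_mem (toTuple_mem g) _

theorem homEquiv'_eq {n k : ℕ} {B : C.Ob n} {A : C.Ob k} {a : Fin k → Tm' C n}
    (h : Homp n k B A a) {g : C.Hom ⟨n, B⟩ ⟨k, A⟩} (hg : g ∈ alphaP n B k A a) :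
    homEquiv' n k B A ⟨a, h⟩ = g :=
  Part.get_eq_of_mem hg _

theorem homEquiv'_mem {n k : ℕ} {B : C.Ob n} {A : C.Ob k} {a : Fin k → Tm' C n}
    (h : Homp n k B A a) : homEquiv' n k B A ⟨a, h⟩ ∈ alphaP n B k A a :=
  Part.get_mem _

theorem alphaP_proj {n : ℕ} (A : C.Ob (n + 1)) :
    C.p A ∈ alphaP (n + 1) A n (C.ft A) fun j : Fin n =>
      vDef (n + 1) (n - j) (by have := j.isLt; omega) A := by
  have e : ftLe' (ftF C) (show n ≤ n + 1 by omega) A = C.ft A :=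
    (ftLe'_of_le _ (le_refl n) A).trans (ftLe'_last _ (C.ft A))
  refine alphaP_congr e rfl ?_ (alphaP_var A (show n ≤ n + 1 by omega))
  calc mor (pIter (show n ≤ n + 1 by omega) A)
      = mor (C.comp (C.p A) (pIter (le_refl n) (C.ft A))) := pIter_of_le _ _ A
    _ = mor (C.comp (C.p A) (C.id ⟨n, C.ft A⟩)) := mor_comp rfl (pIter_last _ _)
    _ = mor (C.p A) := congrArg mor (C.comp_id _)

theorem var_subst {n k : ℕ} {B : C.Ob n} {A : C.Ob k} {a : Fin k → Tm' C n}
    (hHom : Homp n k B A a) (i : ℕ) (hik : i < k) :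
    substTm' n k B (vDef k i hik A) a = Part.some (a ⟨k - i - 1, by omega⟩) := by
  obtain ⟨g, hg⟩ := Part.dom_iff_mem.mp (dom_iff.mpr hHom)
  have e0 : C.ft (vDef k i hik A).1 = A :=
    C.pb_ft (ftLe' (ftF C) (vle hik) A) A
      (cR (oe (ft_ftLe' (vle hik) A).symm) (pIter (by omega) A))
  have hg' : cR (oe e0.symm) g ∈ alphaP n B k (C.ft (vDef k i hik A).1) a :=
    alphaP_congr e0.symm rfl (mor_cR _ _).symm hg
  rw [substTm'_eq_some (vDef k i hik A) a hg']
  congr 1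
  obtain ⟨h', hh', hpb'⟩ := mem_substTy'.mp (hHom ⟨k - i - 1, by omega⟩)
  have hpit := alphaP_pIter hg (show k - i - 1 ≤ k by omega)
  have hmor : mor (C.comp g (pIter (show k - i - 1 ≤ k by omega) A)) = mor h' :=
    alphaP_mor_unique (ft_ftLe' (vle hik) A).symm rfl hpit hh'
  have hstep : C.pb (ftLe' (ftF C) (vle hik) A) B
      (C.comp g (cR (oe (ft_ftLe' (vle hik) A).symm)
        (pIter (by omega : k - i - 1 ≤ k) A))) =
      C.pb (vDef k i hik A).1 B (cR (oe e0.symm) g) :=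
    pb_comp' (ftLe' (ftF C) (vle hik) A) A
      (cR (oe (ft_ftLe' (vle hik) A).symm) (pIter (by omega) A)) B g
  have h2 : (a ⟨k - i - 1, by omega⟩).1 = C.pb (vDef k i hik A).1 B (cR (oe e0.symm) g) := by
    rw [← hpb', ← hstep]
    exact eq_of_heq (pb_congr' rfl HEq.rfl rfl HEq.rfl
      (hmor.symm.trans (mor_comp rfl (mor_cR _ _).symm)))
  refine mkTm_eq (vDef k i hik A).1 B (cR (oe e0.symm) g) _ _ (a ⟨k - i - 1, by omega⟩) h2 ?_
  have h2'' : (a ⟨k - i - 1, by omega⟩).1 = C.pb (ftLe' (ftF C) (vle hik) A) B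
      (C.comp g (cR (oe (ft_ftLe' (vle hik) A).symm)
        (pIter (by omega : k - i - 1 ≤ k) A))) := h2.trans hstep.symm
  obtain ⟨f₀, hf₀, hty₀, heq₀⟩ := mem_alphaP_succ.mp (alphaP_pIter hg (vle hik))
  have hf₀mor : mor (C.comp g (cR (oe (ft_ftLe' (vle hik) A).symm)
      (pIter (by omega : k - i - 1 ≤ k) A))) = mor f₀ :=
    (mor_comp rfl (mor_cR _ _)).trans
      (alphaP_mor_unique (ft_ftLe' (vle hik) A).symm rfl hpit hf₀)
  have h3 : (vDef k i hik A).1 = C.pb (ftLe' (ftF C) (vle hik) A) A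
      (cR (oe (ft_ftLe' (vle hik) A).symm) (pIter (by omega) A)) := rfl
  have hinner : mor (C.comp (cL (oe (ftty h3)) (cR (oe h3) (vDef k i hik A).2.1))
      (C.q (ftLe' (ftF C) (vle hik) A) A
        (cR (oe (ft_ftLe' (vle hik) A).symm) (pIter (by omega) A)))) =
      mor (pIter (vle hik) A) :=
    mkTm_comp_q' (ftLe' (ftF C) (vle hik) A) A
      (cR (oe (ft_ftLe' (vle hik) A).symm) (pIter (by omega) A)) (pIter (vle hik) A)
      (mor_ext ((pIter_p (vle hik) A).trans (mor_cR _ _).symm)) (vDef k i hik A) rfl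
      rfl HEq.rfl rfl h3
  have hqq : C.comp (C.comp (cL (oe (ftty h2)) (cR (oe h2) (a ⟨k - i - 1, by omega⟩).2.1))
      (C.q (vDef k i hik A).1 B (cR (oe e0.symm) g)))
      (C.q (ftLe' (ftF C) (vle hik) A) A
        (cR (oe (ft_ftLe' (vle hik) A).symm) (pIter (by omega) A))) =
      C.comp (C.comp (cR (oe e0.symm) g) (vDef k i hik A).2.1)
      (C.q (ftLe' (ftF C) (vle hik) A) A
        (cR (oe (ft_ftLe' (vle hik) A).symm) (pIter (by omega) A))) := by
    apply mor_ext
    calc mor (C.comp (C.comp (cL (oe (ftty h2)) (cR (oe h2) (a ⟨k - i - 1, by omega⟩).2.1))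
            (C.q (vDef k i hik A).1 B (cR (oe e0.symm) g)))
            (C.q (ftLe' (ftF C) (vle hik) A) A
              (cR (oe (ft_ftLe' (vle hik) A).symm) (pIter (by omega) A))))
        = mor (C.comp (cL (oe (ftty h2)) (cR (oe h2) (a ⟨k - i - 1, by omega⟩).2.1))
            (C.comp (C.q (vDef k i hik A).1 B (cR (oe e0.symm) g))
              (C.q (ftLe' (ftF C) (vle hik) A) A
                (cR (oe (ft_ftLe' (vle hik) A).symm) (pIter (by omega) A))))) :=
          congrArg mor (C.assoc _ _ _)
      _ = mor (C.comp (cL (oe (ftty h2'')) (cR (oe h2'') (a ⟨k - i - 1, by omega⟩).2.1))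
            (C.q (ftLe' (ftF C) (vle hik) A) B
              (C.comp g (cR (oe (ft_ftLe' (vle hik) A).symm)
                (pIter (by omega : k - i - 1 ≤ k) A))))) :=
          mor_comp (((mor_cL _ _).trans (mor_cR _ _)).trans
              (((mor_cL _ _).trans (mor_cR _ _)).symm))
            (mor_q_comp (ftLe' (ftF C) (vle hik) A) A
              (cR (oe (ft_ftLe' (vle hik) A).symm) (pIter (by omega) A)) B g).symm
      _ = mor (C.comp (cL (oe (ftty hty₀)) (cR (oe hty₀) (a ⟨k - i - 1, by omega⟩).2.1))
            (C.q (ftLe' (ftF C) (vle hik) A) B f₀)) :=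
          mor_comp (((mor_cL _ _).trans (mor_cR _ _)).trans
              (((mor_cL _ _).trans (mor_cR _ _)).symm))
            (mor_q' rfl HEq.rfl rfl HEq.rfl hf₀mor)
      _ = mor (C.comp g (pIter (vle hik) A)) := (congrArg mor heq₀).symm
      _ = mor (C.comp g (C.comp (cL (oe (ftty h3)) (cR (oe h3) (vDef k i hik A).2.1))
            (C.q (ftLe' (ftF C) (vle hik) A) A
              (cR (oe (ft_ftLe' (vle hik) A).symm) (pIter (by omega) A))))) :=
          (mor_comp rfl hinner).symm
      _ = mor (C.comp (C.comp g (cL (oe (ftty h3)) (cR (oe h3) (vDef k i hik A).2.1)))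
            (C.q (ftLe' (ftF C) (vle hik) A) A
              (cR (oe (ft_ftLe' (vle hik) A).symm) (pIter (by omega) A)))) :=
          (congrArg mor (C.assoc _ _ _)).symm
      _ = mor (C.comp (C.comp (cR (oe e0.symm) g) (vDef k i hik A).2.1)
            (C.q (ftLe' (ftF C) (vle hik) A) A
              (cR (oe (ft_ftLe' (vle hik) A).symm) (pIter (by omega) A)))) :=
          mor_comp (mor_comp (mor_cR _ _).symm
            ((mor_cL _ _).trans (mor_cR _ _))) rfl
  have hpp : C.comp (C.comp (cL (oe (ftty h2)) (cR (oe h2) (a ⟨k - i - 1, by omega⟩).2.1))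
      (C.q (vDef k i hik A).1 B (cR (oe e0.symm) g)))
      (pC (ftLe' (ftF C) (vle hik) A) A
        (cR (oe (ft_ftLe' (vle hik) A).symm) (pIter (by omega) A))) =
      C.comp (C.comp (cR (oe e0.symm) g) (vDef k i hik A).2.1)
      (pC (ftLe' (ftF C) (vle hik) A) A
        (cR (oe (ft_ftLe' (vle hik) A).symm) (pIter (by omega) A))) := by
    apply mor_ext
    calc mor (C.comp (C.comp (cL (oe (ftty h2)) (cR (oe h2) (a ⟨k - i - 1, by omega⟩).2.1))
            (C.q (vDef k i hik A).1 B (cR (oe e0.symm) g)))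
            (pC (ftLe' (ftF C) (vle hik) A) A
              (cR (oe (ft_ftLe' (vle hik) A).symm) (pIter (by omega) A))))
        = mor (C.comp (cL (oe (ftty h2)) (cR (oe h2) (a ⟨k - i - 1, by omega⟩).2.1))
            (C.comp (C.q (vDef k i hik A).1 B (cR (oe e0.symm) g))
              (C.p (vDef k i hik A).1))) :=
          (congrArg mor (C.assoc _ _ _)).trans (mor_comp rfl (mor_comp rfl (mor_cR _ _)))
      _ = mor (C.comp (cL (oe (ftty h2)) (cR (oe h2) (a ⟨k - i - 1, by omega⟩).2.1))
            (C.comp (pC (vDef k i hik A).1 B (cR (oe e0.symm) g)) (cR (oe e0.symm) g))) :=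
          mor_comp rfl (congrArg mor (square' (vDef k i hik A).1 B (cR (oe e0.symm) g)))
      _ = mor (C.comp (C.comp (cL (oe (ftty h2)) (cR (oe h2) (a ⟨k - i - 1, by omega⟩).2.1))
            (pC (vDef k i hik A).1 B (cR (oe e0.symm) g))) (cR (oe e0.symm) g)) :=
          (congrArg mor (C.assoc _ _ _)).symm
      _ = mor (C.comp (C.id ⟨n, B⟩) (cR (oe e0.symm) g)) := by
          have hsec : mor (C.comp (cL (oe (ftty h2))
              (cR (oe h2) (a ⟨k - i - 1, by omega⟩).2.1))
              (pC (vDef k i hik A).1 B (cR (oe e0.symm) g))) = mor (C.id ⟨n, B⟩) :=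
            calc mor (C.comp (cL (oe (ftty h2))
                    (cR (oe h2) (a ⟨k - i - 1, by omega⟩).2.1))
                    (pC (vDef k i hik A).1 B (cR (oe e0.symm) g)))
                = mor (C.comp (a ⟨k - i - 1, by omega⟩).2.1
                    (C.p (a ⟨k - i - 1, by omega⟩).1)) :=
                  mor_comp ((mor_cL _ _).trans (mor_cR _ _))
                    ((mor_cR _ _).trans (mor_p h2.symm))
              _ = mor (C.id ⟨n, C.ft (a ⟨k - i - 1, by omega⟩).1⟩) := by
                  rw [(a ⟨k - i - 1, by omega⟩).2.2]
              _ = mor (C.id ⟨n, B⟩) := mor_id (ftty h2)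
          exact mor_comp hsec rfl
      _ = mor g := (congrArg mor (C.id_comp _)).trans (mor_cR _ _)
      _ = mor (C.comp (cR (oe e0.symm) g) (C.id ⟨k, C.ft (vDef k i hik A).1⟩)) :=
          ((congrArg mor (C.comp_id _)).trans (mor_cR _ _)).symm
      _ = mor (C.comp (cR (oe e0.symm) g) (C.comp (vDef k i hik A).2.1
            (pC (ftLe' (ftF C) (vle hik) A) A
              (cR (oe (ft_ftLe' (vle hik) A).symm) (pIter (by omega) A))))) :=
          mor_comp rfl ((mor_comp rfl (mor_cR _ _)).trans
            (congrArg mor (vDef k i hik A).2.2)).symm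
      _ = mor (C.comp (C.comp (cR (oe e0.symm) g) (vDef k i hik A).2.1)
            (pC (ftLe' (ftF C) (vle hik) A) A
              (cR (oe (ft_ftLe' (vle hik) A).symm) (pIter (by omega) A)))) :=
          (congrArg mor (C.assoc _ _ _)).symm
  exact congrArg mor (pb_hom_ext (ftLe' (ftF C) (vle hik) A) A
    (cR (oe (ft_ftLe' (vle hik) A).symm) (pIter (by omega) A)) hqq hpp)

theorem subst_subst_tm {n k m : ℕ} {Cn : C.Ob n} {B : C.Ob k} {b : Fin k → Tm' C n}
    {a : Fin m → Tm' C k} {t : Tm' C m}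
    (hbHom : Homp n k Cn B b) (s : Tm' C k) (hs : s ∈ substTm' k m B t a)
    (c : Fin m → Tm' C n) (hc : ∀ i, c i ∈ substTm' n k Cn (a i) b) :
    substTm' n k Cn s b = substTm' n m Cn t c := by
  obtain ⟨gb, hgb⟩ := Part.dom_iff_mem.mp (dom_iff.mpr hbHom)
  obtain ⟨fa, hfa, hse⟩ := mem_substTm'.mp hs
  have hs1 : s.1 = C.pb t.1 B fa := by rw [← hse]; rfl
  have hgb' : cR (oe (ftty hs1).symm) gb ∈ alphaP n Cn k (C.ft s.1) b :=
    alphaP_congr (ftty hs1).symm rfl (mor_cR _ _).symm hgb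
  have hcomp : C.comp gb fa ∈ alphaP n Cn m (C.ft t.1) c := alphaP_comp hgb hfa hc
  rw [substTm'_eq_some s b hgb', substTm'_eq_some t c hcomp]
  congr 1
  have h2 : C.pb s.1 Cn (cR (oe (ftty hs1).symm) gb) = C.pb t.1 Cn (C.comp gb fa) := by
    rw [pb_comp' t.1 B fa Cn gb]
    exact eq_of_heq (pb_congr' rfl (heq_of_eq hs1) rfl HEq.rfl
      ((mor_cR _ _).trans (mor_cR _ _).symm))
  have h2' : (mkTm s.1 Cn (cR (oe (ftty hs1).symm) gb)
      (C.comp (cR (oe (ftty hs1).symm) gb) s.2.1)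
      (by rw [C.assoc, s.2.2, C.comp_id])).1 =
      C.pb (C.pb t.1 B fa) Cn (cR (oe (C.pb_ft t.1 B fa)).symm gb) :=
    h2.trans (pb_comp' t.1 B fa Cn gb)
  refine (mkTm_eq t.1 Cn (C.comp gb fa) (C.comp (C.comp gb fa) t.2.1)
    (by rw [C.assoc, t.2.2, C.comp_id])
    (mkTm s.1 Cn (cR (oe (ftty hs1).symm) gb)
      (C.comp (cR (oe (ftty hs1).symm) gb) s.2.1)
      (by rw [C.assoc, s.2.2, C.comp_id])) h2 ?_).symm
  have hinner : mor (C.comp (cL (oe (ftty h2')) (cR (oe h2')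
      (mkTm s.1 Cn (cR (oe (ftty hs1).symm) gb)
        (C.comp (cR (oe (ftty hs1).symm) gb) s.2.1)
        (by rw [C.assoc, s.2.2, C.comp_id])).2.1))
      (C.q (C.pb t.1 B fa) Cn (cR (oe (C.pb_ft t.1 B fa)).symm gb))) =
      mor (C.comp gb (cL (oe (ftty hs1)) (cR (oe hs1) s.2.1))) :=
    (mkTm_comp_q' s.1 Cn (cR (oe (ftty hs1).symm) gb)
      (C.comp (cR (oe (ftty hs1).symm) gb) s.2.1)
      (by rw [C.assoc, s.2.2, C.comp_id]) _ rfl rfl (heq_of_eq hs1)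
      ((mor_cR _ _).trans (mor_cR _ _).symm) h2').trans
      (mor_comp (mor_cR _ _) (((mor_cL _ _).trans (mor_cR _ _)).symm))
  calc mor (C.comp (cL (oe (ftty h2)) (cR (oe h2)
          (mkTm s.1 Cn (cR (oe (ftty hs1).symm) gb)
            (C.comp (cR (oe (ftty hs1).symm) gb) s.2.1)
            (by rw [C.assoc, s.2.2, C.comp_id])).2.1))
          (C.q t.1 Cn (C.comp gb fa)))
      = mor (C.comp (cL (oe (ftty h2')) (cR (oe h2')
          (mkTm s.1 Cn (cR (oe (ftty hs1).symm) gb)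
            (C.comp (cR (oe (ftty hs1).symm) gb) s.2.1)
            (by rw [C.assoc, s.2.2, C.comp_id])).2.1))
          (C.comp (C.q (C.pb t.1 B fa) Cn (cR (oe (C.pb_ft t.1 B fa)).symm gb))
            (C.q t.1 B fa))) :=
        mor_comp (((mor_cL _ _).trans (mor_cR _ _)).trans
            (((mor_cL _ _).trans (mor_cR _ _)).symm))
          (mor_q_comp t.1 B fa Cn gb)
    _ = mor (C.comp (C.comp (cL (oe (ftty h2')) (cR (oe h2')
          (mkTm s.1 Cn (cR (oe (ftty hs1).symm) gb)
            (C.comp (cR (oe (ftty hs1).symm) gb) s.2.1)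
            (by rw [C.assoc, s.2.2, C.comp_id])).2.1))
          (C.q (C.pb t.1 B fa) Cn (cR (oe (C.pb_ft t.1 B fa)).symm gb)))
          (C.q t.1 B fa)) :=
        (congrArg mor (C.assoc _ _ _)).symm
    _ = mor (C.comp (C.comp gb (cL (oe (ftty hs1)) (cR (oe hs1) s.2.1))) (C.q t.1 B fa)) :=
        mor_comp hinner rfl
    _ = mor (C.comp gb (C.comp (cL (oe (ftty hs1)) (cR (oe hs1) s.2.1)) (C.q t.1 B fa))) :=
        congrArg mor (C.assoc _ _ _)
    _ = mor (C.comp gb (C.comp fa t.2.1)) :=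
        mor_comp rfl (mkTm_comp_q' t.1 B fa (C.comp fa t.2.1)
          (by rw [C.assoc, t.2.2, C.comp_id]) s hse.symm rfl HEq.rfl rfl hs1)
    _ = mor (C.comp (C.comp gb fa) t.2.1) := (congrArg mor (C.assoc _ _ _)).symm

theorem subst_subst_ty {n k m : ℕ} {Cn : C.Ob n} {B : C.Ob k} {b : Fin k → Tm' C n}
    {a : Fin m → Tm' C k} {A : C.Ob (m + 1)}
    (hbHom : Homp n k Cn B b) (A' : C.Ob (k + 1)) (hA' : A' ∈ substTy' k m B A a)
    (c : Fin m → Tm' C n) (hc : ∀ i, c i ∈ substTm' n k Cn (a i) b) :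
    substTy' n k Cn A' b = substTy' n m Cn A c := by
  obtain ⟨gb, hgb⟩ := Part.dom_iff_mem.mp (dom_iff.mpr hbHom)
  obtain ⟨fa, hfa, hpb⟩ := mem_substTy'.mp hA'
  have hft : C.ft A' = B := by rw [← hpb]; exact C.pb_ft A B fa
  have hgb' : cR (oe hft.symm) gb ∈ alphaP n Cn k (C.ft A') b :=
    alphaP_congr hft.symm rfl (mor_cR _ _).symm hgb
  have hcomp : C.comp gb fa ∈ alphaP n Cn m (C.ft A) c := alphaP_comp hgb hfa hc
  rw [substTy'_eq_some A' b hgb', substTy'_eq_some A c hcomp]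
  congr 1
  rw [pb_comp' A B fa Cn gb]
  exact eq_of_heq (pb_congr' rfl (heq_of_eq hpb.symm) rfl HEq.rfl
    ((mor_cR _ _).trans (mor_cR _ _).symm))

theorem eq_cast_of_mor {X X' Y : Obj C} (e : X = X') (h : C.Hom X Y = C.Hom X' Y)
    {f : C.Hom X' Y} {g : C.Hom X Y} (hm : mor f = mor g) : f = cast h g := by
  subst e; exact mor_ext hm

/-- The model of `𝕊` associated to a contextual category. -/
noncomputable def model (C : CtxCat.{u}) : SubModel.{u} where
  Ctx := C.Ob
  Tm := Tm' C
  star := C.pt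
  ctx_zero_unique := C.pt_unique
  ft _ A := C.ft A
  ty _ t := t.1
  v n i h A := vDef n i h A
  substTy := substTy'
  substTm := substTm'
  ax_def_substTy _ _ _ _ _ := dom_iff
  ax_def_substTm _ _ _ _ _ := dom_iff
  ax_type_var n i h A :=
    mem_substTy'.mpr ⟨cR (oe (ft_ftLe' (vle h) A).symm) (pIter (by omega) A),
      alphaP_congr (ft_ftLe' (vle h) A).symm rfl (mor_cR _ _).symm
        (alphaP_var A (by omega)), rfl⟩
  ax_type_substTy n k B A a C' hC' := by
    obtain ⟨f, hf, h⟩ := mem_substTy'.mp hC'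
    rw [← h]; exact C.pb_ft A B f
  ax_type_substTm n k B b a := by
    apply Part.ext; intro T
    rw [Part.mem_map_iff, mem_substTy']
    constructor
    · rintro ⟨t, ht, hT⟩
      obtain ⟨f, hf, he⟩ := mem_substTm'.mp ht
      exact ⟨f, hf, by rw [← hT, ← he]; rfl⟩
    · rintro ⟨f, hf, hT⟩
      exact ⟨_, mem_substTm'.mpr ⟨f, hf, rfl⟩, hT⟩
  ax_subst_var_ty n A := by
    rw [substTy'_eq_some A _ (alphaP_id (C.ft A)), C.pb_id A]
  ax_subst_var_tm n b := by
    rw [substTm'_eq_some b _ (alphaP_id (C.ft b.1))]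
    congr 1
    refine mkTm_eq _ _ _ _ _ b (C.pb_id b.1).symm ?_
    calc mor (C.comp (cL (oe (ftty (C.pb_id b.1).symm))
            (cR (oe (C.pb_id b.1).symm) b.2.1))
            (C.q b.1 (C.ft b.1) (C.id ⟨n, C.ft b.1⟩)))
        = mor (C.comp b.2.1 (C.id ⟨n + 1, b.1⟩)) :=
          mor_comp ((mor_cL _ _).trans (mor_cR _ _)) (mor_q_id b.1)
      _ = mor b.2.1 := congrArg mor (C.comp_id _)
      _ = mor (C.comp (C.id ⟨n, C.ft b.1⟩) b.2.1) := (congrArg mor (C.id_comp _)).symm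
  ax_var_subst n k B A a hHom i h := var_subst hHom i h
  ax_subst_subst_tm n k m Cn B b a t hb _ s hs c hc := subst_subst_tm hb s hs c hc
  ax_subst_subst_ty n k m Cn B b a A hb _ A' hA' c hc := subst_subst_ty hb A' hA' c hc

end CtxCat

open CtxCat in
/-- Every contextual category `C` arises, up to isomorphism, from a model
of the theory of substitutions `𝕊`: there is a model `M` whose contexts of length `n` are
the objects of level `n` of `C` and whose terms of length `n` are the pairs of an object
`A` of level `n+1` together with a section of `p_A`, such that the contextual category
`F(M)` associated to `M` is isomorphic to `C` (via the correspondence of objects and of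
compatible tuples with morphisms of `C`). -/
theorem contextual_category_from_submodel (C : CtxCat.{u}) :
    ∃ (M : SubModel.{u}) (corr : SubCtxCorrespondence M C)
      (tmEquiv : ∀ n, M.Tm n ≃
        (Σ A : C.Ob (n + 1), { s : C.Hom ⟨n, C.ft A⟩ ⟨n + 1, A⟩ //
          C.comp s (C.p A) = C.id ⟨n, C.ft A⟩ })),
      ∀ n (t : M.Tm n), ((tmEquiv n) t).1 = corr.obEquiv (n + 1) (M.ty n t) := by
  refine ⟨CtxCat.model C, ?_, fun n => Equiv.refl _, ?_⟩
  refine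
    { obEquiv := fun n => Equiv.refl _
      ft_compat := fun n A => rfl
      homEquiv := fun n k B A => CtxCat.homEquiv' n k B A
      id_compat := fun n A h => CtxCat.homEquiv'_eq h (CtxCat.alphaP_id A)
      comp_compat := fun {n k m} B A A' f g h hsub =>
        (CtxCat.homEquiv'_eq h.2
          (CtxCat.alphaP_comp (CtxCat.homEquiv'_mem f.2)
            (CtxCat.homEquiv'_mem g.2) hsub)).symm
      p_compat := fun n A h => CtxCat.homEquiv'_eq h (CtxCat.alphaP_proj A)
      pb_compat := fun n k B A a h T hT => ?_
      q_compat := fun n k B A a h T hT qf hq hsub hlast => ?_ }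
  · obtain ⟨f, hf, hpb⟩ := CtxCat.mem_substTy'.mp hT
    rw [← hpb, Part.mem_unique hf (CtxCat.homEquiv'_mem h)]
    rfl
  · have eT : T = C.pb A B (CtxCat.homEquiv' n k B (C.ft A) ⟨a, h⟩) := by
      obtain ⟨f0, hf0, hpb0⟩ := CtxCat.mem_substTy'.mp hT
      rw [← hpb0, Part.mem_unique hf0 (CtxCat.homEquiv'_mem h)]
      rfl
    have e1 : C.ft T = B := CtxCat.ftty eT
    refine CtxCat.eq_cast_of_mor (CtxCat.oe eT).symm _ ?_
    have hga : CtxCat.cL (CtxCat.oe e1.symm) (CtxCat.homEquiv' n k B (C.ft A) ⟨a, h⟩) ∈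
        CtxCat.alphaP n (C.ft T) k (C.ft A) a :=
      CtxCat.alphaP_congrB e1.symm (CtxCat.mor_cL _ _).symm (CtxCat.homEquiv'_mem h)
    have hf : C.comp (C.p T) (CtxCat.cL (CtxCat.oe e1.symm)
        (CtxCat.homEquiv' n k B (C.ft A) ⟨a, h⟩)) ∈
        CtxCat.alphaP (n + 1) T k (C.ft A) fun j => qf j.castSucc :=
      CtxCat.alphaP_comp (CtxCat.alphaP_proj T) hga hsub
    obtain ⟨f', hf', hty₁, heq₁⟩ := CtxCat.mem_alphaP_succ.mp (CtxCat.homEquiv'_mem hq)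
    have hff : f' = C.comp (C.p T) (CtxCat.cL (CtxCat.oe e1.symm)
        (CtxCat.homEquiv' n k B (C.ft A) ⟨a, h⟩)) := Part.mem_unique hf' hf
    subst hff
    refine (congrArg mor heq₁).trans ?_
    -- notation
    have hfg2 : mor (C.comp (C.p T) (CtxCat.cL (CtxCat.oe e1.symm)
        (CtxCat.homEquiv' n k B (C.ft A) ⟨a, h⟩))) =
        mor (C.comp (CtxCat.cR (CtxCat.oe e1) (C.p T))
          (CtxCat.homEquiv' n k B (C.ft A) ⟨a, h⟩)) :=
      CtxCat.mor_comp (CtxCat.mor_cR _ _).symm (CtxCat.mor_cL _ _)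
    have hty' : (qf (Fin.last k)).1 =
        C.pb (C.pb A B (CtxCat.homEquiv' n k B (C.ft A) ⟨a, h⟩)) T
          (CtxCat.cR (CtxCat.oe
            (C.pb_ft A B (CtxCat.homEquiv' n k B (C.ft A) ⟨a, h⟩))).symm
            (CtxCat.cR (CtxCat.oe e1) (C.p T))) :=
      hty₁.trans ((eq_of_heq (CtxCat.pb_congr' rfl HEq.rfl rfl HEq.rfl hfg2)).trans
        (CtxCat.pb_comp' A B (CtxCat.homEquiv' n k B (C.ft A) ⟨a, h⟩) T
          (CtxCat.cR (CtxCat.oe e1) (C.p T))))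
    have hpv : mor (CtxCat.cR (CtxCat.oe
        (CtxCat.ft_ftLe' (CtxCat.vle (show 0 < n + 1 by omega)) T).symm)
        (CtxCat.pIter (by omega) T)) = mor (C.p T) :=
      (CtxCat.mor_cR _ _).trans ((CtxCat.pIter_of_le _ (le_refl n) T).trans
        ((CtxCat.mor_comp rfl (CtxCat.pIter_last _ _)).trans
          (congrArg mor (C.comp_id _))))
    have hAeq : HEq (ftLe' (CtxCat.ftF C) (CtxCat.vle (show 0 < n + 1 by omega)) T)
        (C.pb A B (CtxCat.homEquiv' n k B (C.ft A) ⟨a, h⟩)) :=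
      heq_of_eq ((CtxCat.ftLe'_last _ T).trans eT)
    have hinner := CtxCat.mkTm_comp_q'
      (ftLe' (CtxCat.ftF C) (CtxCat.vle (show 0 < n + 1 by omega)) T) T
      (CtxCat.cR (CtxCat.oe
        (CtxCat.ft_ftLe' (CtxCat.vle (show 0 < n + 1 by omega)) T).symm)
        (CtxCat.pIter (by omega) T))
      (CtxCat.pIter (CtxCat.vle (show 0 < n + 1 by omega)) T)
      (CtxCat.mor_ext ((CtxCat.pIter_p (CtxCat.vle (show 0 < n + 1 by omega)) T).trans
        (CtxCat.mor_cR _ _).symm))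
      (qf (Fin.last k)) hlast rfl hAeq
      (hpv.trans (((CtxCat.mor_cR _ _).trans (CtxCat.mor_cR _ _)).symm)) hty'
    calc mor (C.comp (CtxCat.cL (CtxCat.oe (CtxCat.ftty hty₁))
            (CtxCat.cR (CtxCat.oe hty₁) (qf (Fin.last k)).2.1))
            (C.q A T (C.comp (C.p T) (CtxCat.cL (CtxCat.oe e1.symm)
              (CtxCat.homEquiv' n k B (C.ft A) ⟨a, h⟩)))))
        = mor (C.comp (CtxCat.cL (CtxCat.oe (CtxCat.ftty hty'))
            (CtxCat.cR (CtxCat.oe hty') (qf (Fin.last k)).2.1))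
            (C.comp (C.q (C.pb A B (CtxCat.homEquiv' n k B (C.ft A) ⟨a, h⟩)) T
              (CtxCat.cR (CtxCat.oe
                (C.pb_ft A B (CtxCat.homEquiv' n k B (C.ft A) ⟨a, h⟩))).symm
                (CtxCat.cR (CtxCat.oe e1) (C.p T))))
              (C.q A B (CtxCat.homEquiv' n k B (C.ft A) ⟨a, h⟩)))) :=
          CtxCat.mor_comp (((CtxCat.mor_cL _ _).trans (CtxCat.mor_cR _ _)).trans
              (((CtxCat.mor_cL _ _).trans (CtxCat.mor_cR _ _)).symm))
            ((CtxCat.mor_q' rfl HEq.rfl rfl HEq.rfl hfg2).trans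
              (CtxCat.mor_q_comp A B (CtxCat.homEquiv' n k B (C.ft A) ⟨a, h⟩) T
                (CtxCat.cR (CtxCat.oe e1) (C.p T))))
      _ = mor (C.comp (C.comp (CtxCat.cL (CtxCat.oe (CtxCat.ftty hty'))
            (CtxCat.cR (CtxCat.oe hty') (qf (Fin.last k)).2.1))
            (C.q (C.pb A B (CtxCat.homEquiv' n k B (C.ft A) ⟨a, h⟩)) T
              (CtxCat.cR (CtxCat.oe
                (C.pb_ft A B (CtxCat.homEquiv' n k B (C.ft A) ⟨a, h⟩))).symm
                (CtxCat.cR (CtxCat.oe e1) (C.p T)))))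
            (C.q A B (CtxCat.homEquiv' n k B (C.ft A) ⟨a, h⟩))) :=
          (congrArg mor (C.assoc _ _ _)).symm
      _ = mor (C.comp (C.id ⟨n + 1, C.pb A B (CtxCat.homEquiv' n k B (C.ft A) ⟨a, h⟩)⟩)
            (C.q A B (CtxCat.homEquiv' n k B (C.ft A) ⟨a, h⟩))) :=
          CtxCat.mor_comp (hinner.trans ((CtxCat.pIter_last _ T).trans
            (CtxCat.mor_id eT))) rfl
      _ = mor (C.q A B (CtxCat.homEquiv' n k B (C.ft A) ⟨a, h⟩)) :=
          congrArg mor (C.id_comp _)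
  · exact fun n t => rfl
end

section
/- In the contextual category built from a contextual category C via the model construction, the comparison bijection α preserves composition: for a morphism f and a compatible tuple (a_1,...,a_k), α(a_1,...,a_k) ∘ f = α(a_1[f],...,a_k[f]), where a[f] denotes the section s_{a∘f}. -/
universe u

/-- The model of the theory of substitutions built from a contextual category `C`:
contexts are objects, terms are sections of the projections (here recorded via the family
`sec`), substitution of a section `a` along `f` is `s_{a∘f}`, and the comparison `α`
(here `homEquiv`) between compatible tuples of sections and morphisms of `C` is defined by
induction: `α()` is the unique map to the terminal object and
`α(a₁, …, a_{k+1}) = q(α(a₁, …, a_k), A) ∘ a_{k+1}`. -/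
structure ModelFromCtx (C : CtxCat.{u}) (M : SubModel.{u}) where
  obEquiv : ∀ n, M.Ctx n ≃ C.Ob n
  ft_compat : ∀ n (A : M.Ctx (n + 1)),
    C.ft (obEquiv (n + 1) A) = obEquiv n (M.ft n A)
  /-- the section of `p_{ty(t)}` corresponding to a term `t` -/
  sec : ∀ n (t : M.Tm n),
    C.Hom ⟨n, obEquiv n (M.ft n (M.ty n t))⟩ ⟨n + 1, obEquiv (n + 1) (M.ty n t)⟩
  sec_is_section : ∀ n (t : M.Tm n),
    C.comp (sec n t) (C.p (obEquiv (n + 1) (M.ty n t))) =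
      cast (by rw [ft_compat n (M.ty n t)])
        (C.id ⟨n, obEquiv n (M.ft n (M.ty n t))⟩)
  homEquiv : ∀ n k (B : M.Ctx n) (A : M.Ctx k),
    { a : Fin k → M.Tm n // M.Hom n k B A a } ≃
      C.Hom ⟨n, obEquiv n B⟩ ⟨k, obEquiv k A⟩
  hom_zero : ∀ n (B : M.Ctx n) (A : M.Ctx 0) (a : Fin 0 → M.Tm n)
    (h : M.Hom n 0 B A a),
    homEquiv n 0 B A ⟨a, h⟩ =
      cast (by rw [C.pt_unique (obEquiv 0 A)]) (C.toPt ⟨n, obEquiv n B⟩)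
  pb_compat : ∀ n k (B : M.Ctx n) (A : M.Ctx (k + 1)) (a : Fin k → M.Tm n)
    (h : M.Hom n k B (M.ft k A) a) (T : M.Ctx (n + 1)) (_ : T ∈ M.substTy n k B A a),
    obEquiv (n + 1) T =
      C.pb (obEquiv (k + 1) A) (obEquiv n B)
        (cast (by rw [ft_compat k A]) (homEquiv n k B (M.ft k A) ⟨a, h⟩))
  hom_succ : ∀ n k (B : M.Ctx n) (A : M.Ctx (k + 1)) (a : Fin (k + 1) → M.Tm n)
    (h : M.Hom n (k + 1) B A a)
    (h' : M.Hom n k B (M.ft k A) (fun i => a i.castSucc))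
    (T : M.Ctx (n + 1)) (hT : T ∈ M.substTy n k B A (fun i => a i.castSucc))
    (hty : M.ty n (a (Fin.last k)) = T) (hftT : M.ft n T = B),
    homEquiv n (k + 1) B A ⟨a, h⟩ =
      C.comp (cast (by rw [hty, hftT]) (sec n (a (Fin.last k))))
        (cast (by rw [pb_compat n k B A (fun i => a i.castSucc) h' T hT])
          (C.q (obEquiv (k + 1) A) (obEquiv n B)
            (cast (by all_goals rw [ft_compat k A])
              (homEquiv n k B (M.ft k A) ⟨fun i => a i.castSucc, h'⟩))))
  subst_sec : ∀ m n (t : M.Tm n) (b : Fin n → M.Tm m) (B' : M.Ctx m)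
    (hb : M.Hom m n B' (M.ft n (M.ty n t)) b) (r : M.Tm m)
    (_ : r ∈ M.substTm m n B' t b)
    (hTy : M.ty m r ∈ M.substTy m n B' (M.ty n t) b) (hft : M.ft m (M.ty m r) = B'),
    C.comp (cast (by rw [hft]) (sec m r))
        (cast (by rw [pb_compat m n B' (M.ty n t) b hb (M.ty m r) hTy])
          (C.q (obEquiv (n + 1) (M.ty n t)) (obEquiv m B')
            (cast (by all_goals rw [ft_compat n (M.ty n t)])
              (homEquiv m n B' (M.ft n (M.ty n t)) ⟨b, hb⟩)))) =
      C.comp (homEquiv m n B' (M.ft n (M.ty n t)) ⟨b, hb⟩) (sec n t)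

section Helpers

lemma cast_trivial {α : Sort v} (p : α = α) (a : α) : cast p a = a :=
  eq_of_heq (cast_heq p a)

lemma ftLe'_self {Ctx : ℕ → Type u} (ft : ∀ n, Ctx (n + 1) → Ctx n) :
    ∀ {k : ℕ} (h : k ≤ k) (A : Ctx k), ftLe' ft h A = A
  | 0, _, A => rfl
  | k + 1, h, A => by
    rw [ftLe', dif_pos rfl]
    exact cast_trivial _ _

lemma ftLe'_succ {Ctx : ℕ → Type u} (ft : ∀ n, Ctx (n + 1) → Ctx n) {k m : ℕ}
    (h : m ≤ k) (h' : m ≤ k + 1) (A : Ctx (k + 1)) :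
    ftLe' ft h' A = ftLe' ft h (ft k A) := by
  rw [ftLe', dif_neg (by omega : ¬ m = k + 1)]

lemma SubModel.hom_last (M : SubModel.{u}) {n k : ℕ} {B : M.Ctx n} {A : M.Ctx (k + 1)}
    {a : Fin (k + 1) → M.Tm n} (h : M.Hom n (k + 1) B A a) :
    M.ty n (a (Fin.last k)) ∈ M.substTy n k B A (fun i => a i.castSucc) := by
  have h0 := h (Fin.last k)
  have e : ftLe' M.ft (Nat.succ_le_of_lt (Fin.last k).isLt) A = A :=
    ftLe'_self M.ft _ A
  exact e ▸ h0

lemma SubModel.hom_castSucc (M : SubModel.{u}) {n k : ℕ} {B : M.Ctx n} {A : M.Ctx (k + 1)}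
    {a : Fin (k + 1) → M.Tm n} (h : M.Hom n (k + 1) B A a) :
    M.Hom n k B (M.ft k A) (fun i => a i.castSucc) := by
  intro i
  have h0 := h i.castSucc
  have e : ftLe' M.ft (Nat.succ_le_of_lt i.castSucc.isLt) A =
      ftLe' M.ft (Nat.succ_le_of_lt i.isLt) (M.ft k A) :=
    ftLe'_succ M.ft _ _ A
  exact e ▸ h0

lemma CtxCat.hom_to_zero_unique (C : CtxCat.{u}) (A0 : C.Ob 0) (X : Σ n, C.Ob n)
    (g g' : C.Hom X ⟨0, A0⟩) : g = g' := by
  have h := C.pt_unique A0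
  subst h
  rw [C.toPt_unique X g, C.toPt_unique X g']

lemma CtxCat.comp_congr_s12 (C : CtxCat.{u}) {X X' Y Y' Z Z' : Σ n, C.Ob n}
    (hX : X = X') (hY : Y = Y') (hZ : Z = Z')
    {f : C.Hom X Y} {f' : C.Hom X' Y'} {g : C.Hom Y Z} {g' : C.Hom Y' Z'}
    (hf : HEq f f') (hg : HEq g g') : HEq (C.comp f g) (C.comp f' g') := by
  subst hX; subst hY; subst hZ
  rw [eq_of_heq hf, eq_of_heq hg]

lemma CtxCat.q_congr_s12 (C : CtxCat.{u}) {n k : ℕ} {A A' : C.Ob (n + 1)} {B : C.Ob k}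
    (hA : A = A') {f : C.Hom ⟨k, B⟩ ⟨n, C.ft A⟩} {f' : C.Hom ⟨k, B⟩ ⟨n, C.ft A'⟩}
    (hf : HEq f f') : HEq (C.q A B f) (C.q A' B f') := by
  subst hA; rw [eq_of_heq hf]

lemma CtxCat.pb_congr_s12 (C : CtxCat.{u}) {n k : ℕ} {A A' : C.Ob (n + 1)} {B : C.Ob k}
    (hA : A = A') {f : C.Hom ⟨k, B⟩ ⟨n, C.ft A⟩} {f' : C.Hom ⟨k, B⟩ ⟨n, C.ft A'⟩}
    (hf : HEq f f') : C.pb A B f = C.pb A' B f' := by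
  subst hA; rw [eq_of_heq hf]

end Helpers

/-- In the model of `𝕊` built from a contextual category `C`, the
comparison bijection `α` preserves composition: `α(a₁, …, a_k) ∘ f = α(a₁[f], …, a_k[f])`,
where `a[f] = s_{a∘f}` is implemented by the substitution operation of the model. -/
theorem modelFromCtx_alpha_preserves_comp (C : CtxCat.{u}) (M : SubModel.{u})
    (mf : ModelFromCtx C M) (m n k : ℕ)
    (B' : M.Ctx m) (B : M.Ctx n) (A : M.Ctx k)
    (bs : Fin n → M.Tm m) (hb : M.Hom m n B' B bs)
    (as : Fin k → M.Tm n) (ha : M.Hom n k B A as)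
    (cs : Fin k → M.Tm m) (hc : M.Hom m k B' A cs)
    (hsubst : ∀ i, cs i ∈ M.substTm m n B' (as i) bs) :
    C.comp (mf.homEquiv m n B' B ⟨bs, hb⟩) (mf.homEquiv n k B A ⟨as, ha⟩) =
      mf.homEquiv m k B' A ⟨cs, hc⟩ := by
  induction k with
  | zero => exact C.hom_to_zero_unique _ _ _ _
  | succ k IH =>
    have ha' : M.Hom n k B (M.ft k A) (fun i => as i.castSucc) := M.hom_castSucc ha
    have hc' : M.Hom m k B' (M.ft k A) (fun i => cs i.castSucc) := M.hom_castSucc hc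
    have hsubst' : ∀ i : Fin k,
        (fun i => cs i.castSucc) i ∈ M.substTm m n B' ((fun i => as i.castSucc) i) bs :=
      fun i => hsubst i.castSucc
    have hT : M.ty n (as (Fin.last k)) ∈ M.substTy n k B A (fun i => as i.castSucc) :=
      M.hom_last ha
    have hTc : M.ty m (cs (Fin.last k)) ∈ M.substTy m k B' A (fun i => cs i.castSucc) :=
      M.hom_last hc
    have hftT : M.ft n (M.ty n (as (Fin.last k))) = B := M.ax_type_substTy _ _ _ _ _ _ hT
    have hftTc : M.ft m (M.ty m (cs (Fin.last k))) = B' := M.ax_type_substTy _ _ _ _ _ _ hTc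
    subst hftT; subst hftTc
    have hTy₂ : M.ty m (cs (Fin.last k)) ∈
        M.substTy m n (M.ft m (M.ty m (cs (Fin.last k)))) (M.ty n (as (Fin.last k))) bs := by
      rw [← M.ax_type_substTm]
      exact Part.mem_map _ (hsubst (Fin.last k))
    have IHeq := IH (M.ft k A) (fun i => as i.castSucc) ha' (fun i => cs i.castSucc) hc'
      hsubst'
    have eqA := mf.hom_succ n k _ A as ha ha' (M.ty n (as (Fin.last k))) hT rfl rfl
    have eqC := mf.hom_succ m k _ A cs hc hc' (M.ty m (cs (Fin.last k))) hTc rfl rfl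
    have SS := mf.subst_sec m n (as (Fin.last k)) bs _ hb (cs (Fin.last k))
      (hsubst (Fin.last k)) hTy₂ rfl
    simp only [cast_trivial] at eqA eqC SS
    rw [eqA, eqC, ← C.assoc, ← SS, C.assoc]
    have epb : (mf.obEquiv (n + 1)) (M.ty n (as (Fin.last k))) =
        C.pb ((mf.obEquiv (k + 1)) A)
          ((mf.obEquiv n) (M.ft n (M.ty n (as (Fin.last k)))))
          (cast (by rw [mf.ft_compat k A])
            ((mf.homEquiv n k (M.ft n (M.ty n (as (Fin.last k)))) (M.ft k A))
              ⟨fun i => as i.castSucc, ha'⟩)) :=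
      mf.pb_compat n k _ A _ ha' _ hT
    apply eq_of_heq
    refine C.comp_congr_s12 rfl rfl rfl HEq.rfl ?_
    refine HEq.trans ?_ (cast_heq _ _).symm
    refine HEq.trans (C.comp_congr_s12 ?ho1 ?ho2 rfl ?hf ?hg)
      ((C.q_comp ((mf.obEquiv (k + 1)) A)
          ((mf.obEquiv n) (M.ft n (M.ty n (as (Fin.last k)))))
          (cast (by rw [mf.ft_compat k A])
            ((mf.homEquiv n k (M.ft n (M.ty n (as (Fin.last k)))) (M.ft k A))
              ⟨fun i => as i.castSucc, ha'⟩))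
          ((mf.obEquiv m) (M.ft m (M.ty m (cs (Fin.last k)))))
          ((mf.homEquiv m n (M.ft m (M.ty m (cs (Fin.last k))))
            (M.ft n (M.ty n (as (Fin.last k))))) ⟨bs, hb⟩)).symm.trans
        (C.q_congr_s12 rfl ?hX))
    case ho1 =>
      exact congrArg (fun X => (⟨m + 1, X⟩ : Σ n, C.Ob n))
        ((mf.pb_compat m n _ _ bs hb _ hTy₂).trans
          (C.pb_congr_s12 epb ((cast_heq _ _).trans (cast_heq _ _).symm)))
    case ho2 =>
      exact congrArg (fun X => (⟨n + 1, X⟩ : Σ n, C.Ob n)) epb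
    case hf =>
      exact (cast_heq _ _).trans
        (C.q_congr_s12 epb ((cast_heq _ _).trans (cast_heq _ _).symm))
    case hg => exact cast_heq _ _
    case hX =>
      exact ((C.comp_congr_s12 rfl rfl (by rw [mf.ft_compat]) HEq.rfl
        (cast_heq _ _)).trans (heq_of_eq IHeq)).trans (cast_heq _ _).symm
end
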